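/- arXiv:2005.10032 — 3 statements merged into one kernel-verified Lean document; each statement's English description precedes it below -/
import Mathlib

section
/- Let p ∈ [1,2) and n ≥ 1. If f(z) = Σ_α a_α z^α + Σ_{|α|≥1} conj(b_α) conj(z)^α is a pluriharmonic function on 𝔹_{ℓ_pⁿ} with sup_{z ∈ 𝔹_{ℓ_pⁿ}} |f(z)| ≤ 1, then for every z with ‖z‖_p ≤ 1 / (3 e^{1/3} n^{1 − 1/p}), one has Σ_{k=1}^{∞} Σ_{|α|=k} (|a_α| + |b_α|) |z^α| ≤ 1. -/
open scoped BigOperators ENNReal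

open scoped Classical in
/-- The `p`-norm on `ℂ^n` for `p ∈ [1,∞]` (`ℝ≥0∞`-valued exponent):
the sup norm if `p = ∞`, and `(∑ ‖z j‖^p)^(1/p)` otherwise. -/
noncomputable def pnormE {n : ℕ} (p : ℝ≥0∞) (z : Fin n → ℂ) : ℝ :=
  if p = ∞ then ⨆ j, ‖z j‖ else (∑ j, ‖z j‖ ^ p.toReal) ^ (1 / p.toReal)

namespace Stmt13Aux

lemma pnormE_eq {n : ℕ} {p : ℝ≥0∞} (hp : p ≠ ∞) (z : Fin n → ℂ) :
    pnormE p z = (∑ j, ‖z j‖ ^ p.toReal) ^ (1 / p.toReal) := by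
  rw [pnormE, if_neg hp]

lemma pnormE_congr {n : ℕ} {p : ℝ≥0∞} {z w : Fin n → ℂ} (h : ∀ j, ‖z j‖ = ‖w j‖) :
    pnormE p z = pnormE p w := by
  unfold pnormE; simp only [h]

lemma pow_self_le (k : ℕ) (hk : 1 ≤ k) :
    (k : ℝ) ^ k ≤ Real.exp 1 ^ (k - 1) * (Nat.factorial k : ℝ) := by
  induction k with
  | zero => omega
  | succ m ih =>
    rcases Nat.eq_zero_or_pos m with hm | hm
    · subst hm; simp
    · have ihm := ih hm
      have hmR : (0:ℝ) < m := by exact_mod_cast hm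
      have key : ((m+1 : ℕ) : ℝ) ^ (m+1) ≤ Real.exp 1 * ((m:ℝ) ^ m * (m+1)) := by
        have h1 : ((m:ℝ) + 1) / m ≤ Real.exp (1 / m) := by
          have := Real.add_one_le_exp (1 / (m:ℝ))
          calc ((m:ℝ)+1)/m = 1/m + 1 := by field_simp; ring
          _ ≤ Real.exp (1/m) := this
        have h2 : (((m:ℝ)+1)/m) ^ m ≤ Real.exp (1/m) ^ m := by
          apply pow_le_pow_left₀ (by positivity) h1
        have h3 : Real.exp (1/(m:ℝ)) ^ m = Real.exp 1 := by
          rw [← Real.exp_nat_mul]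
          congr 1; field_simp
        have h4 : (((m:ℝ)+1)/m) ^ m ≤ Real.exp 1 := h3 ▸ h2
        have h5 : ((m+1:ℕ):ℝ) ^ (m+1) = (((m:ℝ)+1)/m) ^ m * ((m:ℝ)^m * (m+1)) := by
          push_cast
          rw [div_pow, div_mul_eq_mul_div, eq_div_iff (pow_ne_zero _ hmR.ne')]
          ring
        rw [h5]
        apply mul_le_mul_of_nonneg_right h4 (by positivity)
      calc ((m+1 : ℕ) : ℝ) ^ (m+1) ≤ Real.exp 1 * ((m:ℝ) ^ m * (m+1)) := key
      _ ≤ Real.exp 1 * ((Real.exp 1 ^ (m-1) * (Nat.factorial m)) * (m+1)) := by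
          apply mul_le_mul_of_nonneg_left _ (Real.exp_pos 1).le
          apply mul_le_mul_of_nonneg_right ihm (by positivity)
      _ = Real.exp 1 ^ (m+1-1) * (Nat.factorial (m+1) : ℝ) := by
          rw [Nat.factorial_succ, show m + 1 - 1 = (m-1) + 1 by omega]
          push_cast
          rw [pow_succ]
          ring

lemma zeta_pow_N (N : ℕ) (hN : 0 < N) :
    Complex.exp ((2 * Real.pi / N : ℝ) * Complex.I) ^ N = 1 := by
  rw [← Complex.exp_nat_mul, Complex.exp_eq_one_iff]
  refine ⟨1, ?_⟩
  have hN' : (N:ℂ) ≠ 0 := by exact_mod_cast hN.ne'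
  push_cast
  field_simp

lemma zeta_pow_eq_one_iff (N : ℕ) (hN : 0 < N) (m : ℕ) :
    Complex.exp ((2 * Real.pi / N : ℝ) * Complex.I) ^ m = 1 ↔ N ∣ m := by
  rw [← Complex.exp_nat_mul, Complex.exp_eq_one_iff]
  have hπ : (Real.pi : ℂ) ≠ 0 := by exact_mod_cast Real.pi_ne_zero
  have hI := Complex.I_ne_zero
  have hN' : ((N:ℂ)) ≠ 0 := by exact_mod_cast hN.ne'
  have h2πI : (2 * (Real.pi:ℂ) * Complex.I) ≠ 0 := by
    simp [hπ, hI]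
  constructor
  · rintro ⟨ℓ, hℓ⟩
    push_cast at hℓ
    have h2 : (m:ℂ) * (2 * Real.pi * Complex.I) = (ℓ * N) * (2 * Real.pi * Complex.I) := by
      field_simp at hℓ
      linear_combination (2 * Real.pi * Complex.I) * hℓ
    have h3 : (m : ℂ) = ((ℓ * N : ℤ) : ℂ) := by
      have := mul_right_cancel₀ h2πI h2
      push_cast
      exact this
    have h4 : (m : ℤ) = ℓ * N := by exact_mod_cast h3
    exact Int.natCast_dvd_natCast.mp ⟨ℓ, by rw [h4, mul_comm]⟩
  · rintro ⟨d, rfl⟩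
    refine ⟨d, ?_⟩
    push_cast
    field_simp

lemma root_sum (N : ℕ) (hN : 0 < N) (m : ℕ) :
    ∑ c : Fin N, Complex.exp ((2 * Real.pi / N : ℝ) * Complex.I) ^ ((c : ℕ) * m)
      = if N ∣ m then (N : ℂ) else 0 := by
  set ζ := Complex.exp ((2 * Real.pi / N : ℝ) * Complex.I) with hζ
  have key : ∀ c : Fin N, ζ ^ ((c:ℕ) * m) = (ζ ^ m) ^ (c:ℕ) := by
    intro c; rw [← pow_mul, Nat.mul_comm]
  simp only [key]
  rw [Fin.sum_univ_eq_sum_range (fun c => (ζ^m)^c)]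
  by_cases hd : N ∣ m
  · have : ζ ^ m = 1 := (zeta_pow_eq_one_iff N hN m).mpr hd
    simp [this, hd]
  · have h1 : ζ ^ m ≠ 1 := fun hc => hd ((zeta_pow_eq_one_iff N hN m).mp hc)
    rw [geom_sum_eq h1]
    have : (ζ ^ m) ^ N = 1 := by
      rw [← pow_mul, mul_comm, pow_mul, zeta_pow_N N hN, one_pow]
    rw [this]
    simp [hd]

lemma multi_orth (N n : ℕ) (hN : 0 < N) (m : Fin n → ℕ) :
    ∑ γ : Fin n → Fin N, ∏ j, Complex.exp ((2 * Real.pi / N : ℝ) * Complex.I) ^ ((γ j : ℕ) * m j)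
      = if (∀ j, N ∣ m j) then ((N : ℂ)) ^ n else 0 := by
  classical
  have := Finset.prod_univ_sum (fun _ : Fin n => (Finset.univ : Finset (Fin N)))
    (fun j c => Complex.exp ((2 * Real.pi / N : ℝ) * Complex.I) ^ ((c : ℕ) * m j))
  rw [Fintype.piFinset_univ] at this
  rw [← this]
  have : ∀ j : Fin n, ∑ c : Fin N, Complex.exp ((2 * Real.pi / N : ℝ) * Complex.I) ^ ((c : ℕ) * m j)
      = if N ∣ m j then (N : ℂ) else 0 := fun j => root_sum N hN (m j)
  rw [Finset.prod_congr rfl (fun j _ => this j)]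
  by_cases hall : ∀ j, N ∣ m j
  · rw [if_pos hall]
    rw [Finset.prod_congr rfl (fun j _ => if_pos (hall j))]
    simp
  · rw [if_neg hall]
    push_neg at hall
    obtain ⟨j0, hj0⟩ := hall
    exact Finset.prod_eq_zero (Finset.mem_univ j0) (if_neg hj0)

set_option maxHeartbeats 1000000 in
lemma coeff_bound
    {n : ℕ} {p : ℝ≥0∞} (hp : p ≠ ∞) (hP1 : 1 ≤ p.toReal)
    (f h g : (Fin n → ℂ) → ℂ) (a b : (Fin n → ℕ) → ℂ)
    (hfd : ∀ z : Fin n → ℂ, pnormE p z < 1 → f z = h z + (starRingEnd ℂ) (g z))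
    (hha : ∀ z : Fin n → ℂ, pnormE p z < 1 →
      HasSum (fun α : Fin n → ℕ => a α * ∏ k, z k ^ α k) (h z))
    (hgb : ∀ z : Fin n → ℂ, pnormE p z < 1 →
      HasSum (fun α : Fin n → ℕ => b α * ∏ k, z k ^ α k) (g z))
    (hmap : ∀ z : Fin n → ℂ, pnormE p z < 1 → ‖f z‖ ≤ 1)
    (α : Fin n → ℕ) (hα : α ≠ 0)
    (ξ : Fin n → ℝ) (hξ0 : ∀ j, 0 ≤ ξ j)
    (hξball : pnormE p (fun j => ((ξ j : ℝ) : ℂ)) < 1)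
    (θ : ℝ) (hθ0 : 0 < θ) (hθ1 : θ < 1) :
    (‖a α‖ + ‖b α‖) * ∏ j, (θ * ξ j) ^ (α j) ≤ Real.sqrt 2 := by
  classical
  have hP0 : (0:ℝ) < p.toReal := lt_of_lt_of_le one_pos hP1
  set k := ∑ j, α j with hkdef
  have hk1 : 1 ≤ k := by
    rcases Nat.eq_zero_or_pos k with h0 | h0
    · exfalso
      apply hα
      funext j
      have h0' : ∑ j, α j = 0 := h0
      exact Finset.sum_eq_zero_iff.mp h0' j (Finset.mem_univ j)
    · exact h0
  obtain ⟨j0, hj0⟩ : ∃ j0, α j0 ≠ 0 := by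
    by_contra hcon; push_neg at hcon; exact hα (funext hcon)
  have hαk : ∀ j, α j ≤ k := by
    intro j
    exact Finset.single_le_sum (f := fun j => α j) (fun i _ => Nat.zero_le _) (Finset.mem_univ j)
  set ρ : Fin n → ℝ := fun j => θ * ξ j with hρdef
  have hρ0 : ∀ j, 0 ≤ ρ j := fun j => mul_nonneg hθ0.le (hξ0 j)
  have hρle : ∀ j, ρ j ≤ ξ j := by
    intro j
    calc θ * ξ j ≤ 1 * ξ j := mul_le_mul_of_nonneg_right hθ1.le (hξ0 j)
    _ = ξ j := one_mul _
  have hρball : pnormE p (fun j => ((ρ j : ℝ) : ℂ)) < 1 := by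
    refine lt_of_le_of_lt ?_ hξball
    rw [pnormE_eq hp, pnormE_eq hp]
    apply Real.rpow_le_rpow
    · positivity
    · apply Finset.sum_le_sum
      intro j _
      apply Real.rpow_le_rpow (norm_nonneg _) _ hP0.le
      rw [Complex.norm_real, Complex.norm_real, Real.norm_eq_abs, Real.norm_eq_abs,
        abs_of_nonneg (hρ0 j), abs_of_nonneg (hξ0 j)]
      exact hρle j
    · positivity
  -- summability at ξ
  have hnormterm : ∀ (c' : (Fin n → ℕ) → ℂ) (β : Fin n → ℕ),
      ‖c' β * ∏ j, ((ξ j : ℝ):ℂ) ^ β j‖ = ‖c' β‖ * ∏ j, (ξ j) ^ β j := by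
    intro c' β
    rw [norm_mul]
    congr 1
    rw [norm_prod]
    apply Finset.prod_congr rfl
    intro j _
    rw [norm_pow, Complex.norm_real, Real.norm_eq_abs, abs_of_nonneg (hξ0 j)]
  have hSa : Summable (fun β : Fin n → ℕ => ‖a β‖ * ∏ j, (ξ j) ^ β j) := by
    have := (summable_norm_iff.mpr (hha _ hξball).summable)
    simpa only [hnormterm a] using this
  have hSb : Summable (fun β : Fin n → ℕ => ‖b β‖ * ∏ j, (ξ j) ^ β j) := by
    have := (summable_norm_iff.mpr (hgb _ hξball).summable)
    simpa only [hnormterm b] using this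
  have hSM : Summable (fun β : Fin n → ℕ => (‖a β‖ + ‖b β‖) * ∏ j, (ξ j) ^ β j) := by
    have := hSa.add hSb
    convert this using 2 with β
    ring
  set M := ∑' β : Fin n → ℕ, (‖a β‖ + ‖b β‖) * ∏ j, (ξ j) ^ β j with hMdef
  have hM0 : 0 ≤ M := by
    apply tsum_nonneg
    intro β
    have hpr : (0:ℝ) ≤ ∏ j, (ξ j) ^ β j :=
      Finset.prod_nonneg (fun j _ => pow_nonneg (hξ0 j) _)
    exact mul_nonneg (by positivity) hpr
  refine le_of_forall_pos_le_add ?_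
  intro ε hε
  -- choose N
  obtain ⟨j1, hj1⟩ : ∃ j1 : ℕ, 2 * θ ^ j1 * M < ε := by
    have htend : Filter.Tendsto (fun j : ℕ => 2 * θ ^ j * M) Filter.atTop (nhds (2 * 0 * M)) := by
      apply Filter.Tendsto.mul_const
      apply Filter.Tendsto.const_mul
      exact tendsto_pow_atTop_nhds_zero_of_lt_one hθ0.le hθ1
    rw [mul_zero, zero_mul] at htend
    have hev := htend.eventually_lt_const hε
    exact hev.exists
  set N := 3 * k + j1 + 1 with hNdef
  have hN0 : 0 < N := by omega
  have hN2k : 2 * k < N := by omega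
  have hNk : k + j1 ≤ N := by omega
  have hN1 : 1 ≤ N := hN0
  -- ## the core estimate for this N
  set ζ : ℂ := Complex.exp ((2 * Real.pi / N : ℝ) * Complex.I) with hζdef
  have hζabs : ∀ m : ℕ, ‖ζ ^ m‖ = 1 := by
    intro m
    rw [norm_pow]
    have : ‖ζ‖ = 1 := by
      rw [hζdef]
      exact Complex.norm_exp_ofReal_mul_I _
    rw [this, one_pow]
  have hζN : ζ ^ N = 1 := zeta_pow_N N hN0
  have hconjζ : ∀ m : ℕ, (starRingEnd ℂ) (ζ ^ m) = ζ ^ (m * (N - 1)) := by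
    intro m
    have hmul : ζ ^ m * ζ ^ (m * (N - 1)) = 1 := by
      rw [← pow_add]
      have hNsub : 1 + (N - 1) = N := by omega
      have : m + m * (N - 1) = N * m := by
        calc m + m * (N - 1) = m * (1 + (N - 1)) := by ring
        _ = m * N := by rw [hNsub]
        _ = N * m := by ring
      rw [this, pow_mul, hζN, one_pow]
    have hc : (starRingEnd ℂ) (ζ ^ m) * (ζ ^ m) = 1 := by
      rw [mul_comm, Complex.mul_conj]
      have : ‖ζ ^ m‖ = 1 := hζabs m
      rw [Complex.normSq_eq_norm_sq, this]
      norm_num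
    calc (starRingEnd ℂ) (ζ ^ m) = (starRingEnd ℂ) (ζ ^ m) * (ζ ^ m * ζ ^ (m * (N-1))) := by
          rw [hmul, mul_one]
    _ = ((starRingEnd ℂ) (ζ ^ m) * ζ ^ m) * ζ ^ (m * (N-1)) := by ring
    _ = ζ ^ (m * (N-1)) := by rw [hc, one_mul]
  set u : ℂ := if a α = 0 then 1 else (‖a α‖ : ℂ) / a α with hudef
  set v : ℂ := if b α = 0 then 1 else (‖b α‖ : ℂ) / (starRingEnd ℂ) (b α) with hvdef
  have hu1 : ‖u‖ = 1 := by
    rw [hudef]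
    split
    · simp
    · rename_i hne
      rw [norm_div, Complex.norm_real, Real.norm_eq_abs, abs_of_nonneg (norm_nonneg _),
        div_self (by simpa using hne)]
  have hv1 : ‖v‖ = 1 := by
    rw [hvdef]
    split
    · simp
    · rename_i hne
      rw [norm_div, Complex.norm_real, Real.norm_eq_abs, abs_of_nonneg (norm_nonneg _)]
      rw [RingHomIsometric.norm_map]
      exact div_self (by simpa using hne)
  have hua : u * a α = (‖a α‖ : ℂ) := by
    rw [hudef]
    split
    · rename_i he; rw [he]; simp
    · rename_i hne; field_simp
  have hvb : v * (starRingEnd ℂ) (b α) = (‖b α‖ : ℂ) := by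
    rw [hvdef]
    split
    · rename_i he; rw [he]; simp
    · rename_i hne
      have : (starRingEnd ℂ) (b α) ≠ 0 := by simpa using hne
      field_simp
  set dot : (Fin n → Fin N) → (Fin n → ℕ) → ℕ := fun γ m => ∑ j, (γ j : ℕ) * m j with hdotdef
  set w : (Fin n → Fin N) → Fin n → ℂ := fun γ j => ((ρ j : ℝ) : ℂ) * ζ ^ (γ j : ℕ) with hwdef
  have hwball : ∀ γ, pnormE p (w γ) < 1 := by
    intro γ
    have : pnormE p (w γ) = pnormE p (fun j => ((ρ j : ℝ):ℂ)) := by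
      apply pnormE_congr
      intro j
      rw [hwdef]
      simp only [norm_mul]
      rw [hζabs, mul_one]
    rw [this]
    exact hρball
  set χ : (Fin n → Fin N) → ℂ := fun γ => u * ζ ^ ((N - 1) * dot γ α) + v * ζ ^ (dot γ α)
    with hχdef
  set D1 : (Fin n → ℕ) → ℂ := fun β => if (∀ j, (N:ℤ) ∣ (β j : ℤ) - (α j : ℤ)) then 1 else 0
    with hD1def
  set D2 : (Fin n → ℕ) → ℂ := fun β => if (∀ j, (N:ℤ) ∣ (β j : ℤ) + (α j : ℤ)) then 1 else 0
    with hD2def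
  set c : (Fin n → ℕ) → ℂ := fun β => (∏ j, ((ρ j : ℝ) : ℂ) ^ β j) *
      (a β * (u * D1 β + v * D2 β) + (starRingEnd ℂ) (b β) * (u * D2 β + v * D1 β)) with hcdef
  set S : ℂ := (∑ γ : Fin n → Fin N, f (w γ) * χ γ) / ((N:ℂ)) ^ n with hSdef
  have hprodw : ∀ γ β, (∏ j, (w γ j) ^ β j) = (∏ j, ((ρ j : ℝ):ℂ) ^ β j) * ζ ^ (dot γ β) := by
    intro γ β
    rw [hwdef, hdotdef]
    simp only [mul_pow, ← pow_mul]
    rw [Finset.prod_mul_distrib, Finset.prod_pow_eq_pow_sum]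
  -- the sum T
  have hT : ∀ m : Fin n → ℕ, ∑ γ : Fin n → Fin N, ζ ^ (dot γ m)
      = if (∀ j, N ∣ m j) then ((N:ℂ)) ^ n else 0 := by
    intro m
    rw [← multi_orth N n hN0 m]
    apply Finset.sum_congr rfl
    intro γ _
    rw [hdotdef, ← Finset.prod_pow_eq_pow_sum]
  -- divisibility translations
  haveI : NeZero N := ⟨hN0.ne'⟩
  have hcastN1 : ((N - 1 : ℕ) : ZMod N) = -1 := by
    have h2 : ((N - 1 : ℕ) : ZMod N) + 1 = 0 := by
      rw [← Nat.cast_one (R := ZMod N), ← Nat.cast_add, Nat.sub_add_cancel hN1,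
        ZMod.natCast_self]
    linear_combination h2
  have ht1 : ∀ bb aa : ℕ, (N ∣ bb + (N - 1) * aa) ↔ ((N:ℤ) ∣ (bb:ℤ) - (aa:ℤ)) := by
    intro bb aa
    rw [← ZMod.natCast_eq_zero_iff, ← ZMod.intCast_zmod_eq_zero_iff_dvd]
    push_cast [hcastN1]
    constructor <;> intro h2 <;> linear_combination h2
  have ht2 : ∀ bb aa : ℕ, (N ∣ bb + aa) ↔ ((N:ℤ) ∣ (bb:ℤ) + (aa:ℤ)) := by
    intro bb aa
    rw [← ZMod.natCast_eq_zero_iff, ← ZMod.intCast_zmod_eq_zero_iff_dvd]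
    push_cast
    constructor <;> intro h2 <;> linear_combination h2
  have ht3 : ∀ bb aa : ℕ, (N ∣ bb * (N - 1) + (N - 1) * aa) ↔ ((N:ℤ) ∣ (bb:ℤ) + (aa:ℤ)) := by
    intro bb aa
    rw [← ZMod.natCast_eq_zero_iff, ← ZMod.intCast_zmod_eq_zero_iff_dvd]
    push_cast [hcastN1]
    constructor <;> intro h2 <;> linear_combination -h2
  have ht4 : ∀ bb aa : ℕ, (N ∣ bb * (N - 1) + aa) ↔ ((N:ℤ) ∣ (bb:ℤ) - (aa:ℤ)) := by
    intro bb aa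
    rw [← ZMod.natCast_eq_zero_iff, ← ZMod.intCast_zmod_eq_zero_iff_dvd]
    push_cast [hcastN1]
    constructor <;> intro h2 <;> linear_combination -h2
  -- ## HasSum c S
  have hNn0 : ((N:ℂ)) ^ n ≠ 0 := by
    apply pow_ne_zero
    exact_mod_cast hN0.ne'
  have hdc1 : ∀ γ β, dot γ β + (N - 1) * dot γ α = dot γ (fun j => β j + (N - 1) * α j) := by
    intro γ β
    rw [hdotdef]
    simp only [Finset.mul_sum, ← Finset.sum_add_distrib]
    apply Finset.sum_congr rfl
    intro j _
    ring
  have hdc2 : ∀ γ β, dot γ β + dot γ α = dot γ (fun j => β j + α j) := by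
    intro γ β
    rw [hdotdef]
    simp only [← Finset.sum_add_distrib]
    apply Finset.sum_congr rfl
    intro j _
    ring
  have hdc3 : ∀ γ β, dot γ β * (N - 1) + (N - 1) * dot γ α
      = dot γ (fun j => β j * (N - 1) + (N - 1) * α j) := by
    intro γ β
    rw [hdotdef]
    simp only [Finset.mul_sum, Finset.sum_mul, ← Finset.sum_add_distrib]
    apply Finset.sum_congr rfl
    intro j _
    ring
  have hdc4 : ∀ γ β, dot γ β * (N - 1) + dot γ α = dot γ (fun j => β j * (N - 1) + α j) := by
    intro γ β
    rw [hdotdef]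
    simp only [Finset.sum_mul, ← Finset.sum_add_distrib]
    apply Finset.sum_congr rfl
    intro j _
    ring
  have hSsum : HasSum c S := by
    have hs := hasSum_sum (s := (Finset.univ : Finset (Fin n → Fin N)))
      (f := fun γ (β : Fin n → ℕ) => (a β * ∏ j, (w γ j) ^ β j
        + star (b β * ∏ j, (w γ j) ^ β j)) * (χ γ / ((N:ℂ)) ^ n))
      (a := fun γ => (h (w γ) + star (g (w γ))) * (χ γ / ((N:ℂ)) ^ n))
      (fun γ _ => ((hha (w γ) (hwball γ)).add ((hgb (w γ) (hwball γ)).star)).mul_right _)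
    have hfun : (fun β : Fin n → ℕ => ∑ γ : Fin n → Fin N, (a β * ∏ j, (w γ j) ^ β j
        + star (b β * ∏ j, (w γ j) ^ β j)) * (χ γ / ((N:ℂ)) ^ n)) = c := by
      funext β
      set P : ℂ := ∏ j, ((ρ j : ℝ) : ℂ) ^ β j with hPdef
      have hPconj : (starRingEnd ℂ) P = P := by
        rw [hPdef, map_prod]
        apply Finset.prod_congr rfl
        intro j _
        rw [map_pow, Complex.conj_ofReal]
      have hterm : ∀ γ : Fin n → Fin N,
          (a β * ∏ j, (w γ j) ^ β j + star (b β * ∏ j, (w γ j) ^ β j)) * (χ γ / ((N:ℂ)) ^ n)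
          = (a β * P * u) * ζ ^ (dot γ (fun j => β j + (N - 1) * α j)) / ((N:ℂ)) ^ n
          + (a β * P * v) * ζ ^ (dot γ (fun j => β j + α j)) / ((N:ℂ)) ^ n
          + ((starRingEnd ℂ) (b β) * P * u)
              * ζ ^ (dot γ (fun j => β j * (N - 1) + (N - 1) * α j)) / ((N:ℂ)) ^ n
          + ((starRingEnd ℂ) (b β) * P * v)
              * ζ ^ (dot γ (fun j => β j * (N - 1) + α j)) / ((N:ℂ)) ^ n := by
        intro γ
        rw [hprodw γ, ← hPdef, ← hdc1 γ β, ← hdc2 γ β, ← hdc3 γ β, ← hdc4 γ β]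
        simp only [← starRingEnd_apply, map_mul, hPconj, hconjζ, hχdef]
        simp only [pow_add]
        ring
      rw [Finset.sum_congr rfl (fun γ _ => hterm γ)]
      simp only [Finset.sum_add_distrib, ← Finset.sum_div]
      simp only [← Finset.mul_sum]
      have hTD1 : ∑ γ : Fin n → Fin N, ζ ^ (dot γ (fun j => β j + (N - 1) * α j))
          = ((N:ℂ)) ^ n * D1 β := by
        rw [hT]
        simp only [hD1def]
        by_cases hcond : ∀ j, (N:ℤ) ∣ (β j : ℤ) - (α j : ℤ)
        · rw [if_pos (fun j => (ht1 _ _).mpr (hcond j)), if_pos hcond, mul_one]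
        · rw [if_neg, if_neg hcond, mul_zero]
          intro hcc
          exact hcond (fun j => (ht1 _ _).mp (hcc j))
      have hTD2 : ∑ γ : Fin n → Fin N, ζ ^ (dot γ (fun j => β j + α j))
          = ((N:ℂ)) ^ n * D2 β := by
        rw [hT]
        simp only [hD2def]
        by_cases hcond : ∀ j, (N:ℤ) ∣ (β j : ℤ) + (α j : ℤ)
        · rw [if_pos (fun j => (ht2 _ _).mpr (hcond j)), if_pos hcond, mul_one]
        · rw [if_neg, if_neg hcond, mul_zero]
          intro hcc
          exact hcond (fun j => (ht2 _ _).mp (hcc j))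
      have hTD3 : ∑ γ : Fin n → Fin N, ζ ^ (dot γ (fun j => β j * (N - 1) + (N - 1) * α j))
          = ((N:ℂ)) ^ n * D2 β := by
        rw [hT]
        simp only [hD2def]
        by_cases hcond : ∀ j, (N:ℤ) ∣ (β j : ℤ) + (α j : ℤ)
        · rw [if_pos (fun j => (ht3 _ _).mpr (hcond j)), if_pos hcond, mul_one]
        · rw [if_neg, if_neg hcond, mul_zero]
          intro hcc
          exact hcond (fun j => (ht3 _ _).mp (hcc j))
      have hTD4 : ∑ γ : Fin n → Fin N, ζ ^ (dot γ (fun j => β j * (N - 1) + α j))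
          = ((N:ℂ)) ^ n * D1 β := by
        rw [hT]
        simp only [hD1def]
        by_cases hcond : ∀ j, (N:ℤ) ∣ (β j : ℤ) - (α j : ℤ)
        · rw [if_pos (fun j => (ht4 _ _).mpr (hcond j)), if_pos hcond, mul_one]
        · rw [if_neg, if_neg hcond, mul_zero]
          intro hcc
          exact hcond (fun j => (ht4 _ _).mp (hcc j))
      rw [hTD1, hTD2, hTD3, hTD4]
      simp only [hcdef]
      field_simp
      ring
    have hval : (∑ γ : Fin n → Fin N, (h (w γ) + star (g (w γ))) * (χ γ / ((N:ℂ)) ^ n)) = S := by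
      rw [hSdef, Finset.sum_div]
      apply Finset.sum_congr rfl
      intro γ _
      rw [← starRingEnd_apply, ← hfd _ (hwball γ), mul_div_assoc]
    rw [hfun, hval] at hs
    exact hs
  -- ## value of c α
  have hj0k : (α j0 : ℤ) + (α j0 : ℤ) ≤ 2 * k := by
    have := hαk j0
    omega
  have hD1α : D1 α = 1 := by
    simp only [hD1def]
    rw [if_pos]
    intro j
    simp
  have hD2α : D2 α = 0 := by
    simp only [hD2def]
    rw [if_neg]
    intro hcc
    have hd := hcc j0
    have hpos : (0:ℤ) < (α j0 : ℤ) + (α j0 : ℤ) := by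
      have : 0 < α j0 := Nat.pos_of_ne_zero hj0
      omega
    have := Int.le_of_dvd hpos hd
    omega
  have hcα : c α = (((‖a α‖ + ‖b α‖ : ℝ)) : ℂ) * ∏ j, ((ρ j : ℝ) : ℂ) ^ α j := by
    simp only [hcdef, hD1α, hD2α]
    rw [mul_zero, add_zero, mul_zero, zero_add, mul_one, mul_one]
    rw [mul_comm (a α) u, mul_comm ((starRingEnd ℂ) (b α)) v, hua, hvb]
    push_cast
    ring
  -- ## norm of S
  have hNr0 : (0:ℝ) < (N:ℝ) ^ n := by positivity
  have hnsqζ : ∀ m : ℕ, Complex.normSq (ζ ^ m) = 1 := by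
    intro m
    have h1 : ‖ζ ^ m‖ ^ 2 = 1 := by rw [hζabs]; norm_num
    rw [← h1, ← Complex.sq_norm]
  have hnsqu : Complex.normSq u = 1 := by
    have h1 : ‖u‖ ^ 2 = 1 := by rw [hu1]; norm_num
    rw [← h1, ← Complex.sq_norm]
  have hnsqv : Complex.normSq v = 1 := by
    have h1 : ‖v‖ ^ 2 = 1 := by rw [hv1]; norm_num
    rw [← h1, ← Complex.sq_norm]
  have hχsq : ∀ γ : Fin n → Fin N, ‖χ γ‖ ^ 2
      = 2 + 2 * (u * (starRingEnd ℂ) v * (starRingEnd ℂ) (ζ ^ (dot γ (fun j => 2 * α j)))).re := by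
    intro γ
    have hd2 : dot γ (fun j => 2 * α j) = 2 * dot γ α := by
      rw [hdotdef, Finset.mul_sum]
      apply Finset.sum_congr rfl
      intro j _
      ring
    have hcross : (u * ζ ^ ((N - 1) * dot γ α)) * (starRingEnd ℂ) (v * ζ ^ (dot γ α))
        = u * (starRingEnd ℂ) v * (starRingEnd ℂ) (ζ ^ (dot γ (fun j => 2 * α j))) := by
      rw [map_mul, hconjζ, hd2, hconjζ]
      rw [show (2 * dot γ α) * (N - 1) = (N - 1) * dot γ α + dot γ α * (N - 1) by ring]
      rw [pow_add]
      ring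
    rw [show ‖χ γ‖ ^ 2 = Complex.normSq (χ γ) from by rw [← Complex.sq_norm]]
    simp only [hχdef]
    rw [Complex.normSq_add, Complex.normSq_mul, Complex.normSq_mul, hnsqu, hnsqv,
      hnsqζ, hnsqζ, hcross]
    norm_num
  have hχsum : ∑ γ : Fin n → Fin N, ‖χ γ‖ ^ 2 = 2 * (N:ℝ) ^ n := by
    rw [Finset.sum_congr rfl (fun γ _ => hχsq γ)]
    rw [Finset.sum_add_distrib]
    have hzero : ∑ γ : Fin n → Fin N,
        (u * (starRingEnd ℂ) v * (starRingEnd ℂ) (ζ ^ (dot γ (fun j => 2 * α j)))).re = 0 := by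
      rw [← Complex.re_sum, ← Finset.mul_sum, ← map_sum]
      have hTz : ∑ γ : Fin n → Fin N, ζ ^ (dot γ (fun j => 2 * α j)) = 0 := by
        rw [hT, if_neg]
        intro hcc
        have hd := hcc j0
        have h1 : 0 < 2 * α j0 := by
          have := Nat.pos_of_ne_zero hj0
          omega
        have h2 := Nat.le_of_dvd h1 hd
        have := hαk j0
        omega
      rw [hTz]
      simp
    rw [← Finset.mul_sum, hzero, mul_zero, add_zero, Finset.sum_const, Finset.card_univ,
      Fintype.card_fun, Fintype.card_fin, Fintype.card_fin]
    push_cast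
    ring
  have hSle : ‖S‖ ≤ Real.sqrt 2 := by
    have h1 : ‖∑ γ : Fin n → Fin N, f (w γ) * χ γ‖ ≤ ∑ γ : Fin n → Fin N, ‖χ γ‖ := by
      refine (norm_sum_le _ _).trans ?_
      apply Finset.sum_le_sum
      intro γ _
      rw [norm_mul]
      calc ‖f (w γ)‖ * ‖χ γ‖ ≤ 1 * ‖χ γ‖ :=
            mul_le_mul_of_nonneg_right (hmap _ (hwball γ)) (norm_nonneg _)
      _ = ‖χ γ‖ := one_mul _
    have h2 : (∑ γ : Fin n → Fin N, ‖χ γ‖) ^ 2 ≤ (N:ℝ) ^ n * (2 * (N:ℝ) ^ n) := by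
      have h3 := sq_sum_le_card_mul_sum_sq (s := (Finset.univ : Finset (Fin n → Fin N)))
        (f := fun γ : Fin n → Fin N => ‖χ γ‖)
      rw [hχsum] at h3
      calc (∑ γ : Fin n → Fin N, ‖χ γ‖) ^ 2
          ≤ ((Finset.univ : Finset (Fin n → Fin N)).card : ℝ) * (2 * (N:ℝ) ^ n) := h3
      _ = (N:ℝ) ^ n * (2 * (N:ℝ) ^ n) := by
          rw [Finset.card_univ, Fintype.card_fun, Fintype.card_fin, Fintype.card_fin]
          push_cast
          ring
    have hnn : 0 ≤ ∑ γ : Fin n → Fin N, ‖χ γ‖ := Finset.sum_nonneg fun γ _ => norm_nonneg _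
    have hsq2 : Real.sqrt 2 ^ 2 = 2 := Real.sq_sqrt (by norm_num)
    have h3 : ∑ γ : Fin n → Fin N, ‖χ γ‖ ≤ Real.sqrt 2 * (N:ℝ) ^ n := by
      calc ∑ γ : Fin n → Fin N, ‖χ γ‖
          = Real.sqrt ((∑ γ : Fin n → Fin N, ‖χ γ‖) ^ 2) := (Real.sqrt_sq hnn).symm
      _ ≤ Real.sqrt ((N:ℝ) ^ n * (2 * (N:ℝ) ^ n)) := Real.sqrt_le_sqrt h2
      _ = Real.sqrt (2 * ((N:ℝ) ^ n) ^ 2) := by ring_nf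
      _ = Real.sqrt 2 * (N:ℝ) ^ n := by
          rw [Real.sqrt_mul (by norm_num : (0:ℝ) ≤ 2), Real.sqrt_sq hNr0.le]
    have h4 : ‖S‖ = ‖∑ γ : Fin n → Fin N, f (w γ) * χ γ‖ / (N:ℝ) ^ n := by
      rw [hSdef, norm_div, norm_pow, Complex.norm_natCast]
    rw [h4, div_le_iff₀ hNr0]
    exact h1.trans h3
  -- ## tail bound
  have hρprod : ∀ β : Fin n → ℕ, ∏ j, (ρ j) ^ β j = θ ^ (∑ j, β j) * ∏ j, (ξ j) ^ β j := by
    intro β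
    rw [hρdef]
    simp only [mul_pow]
    rw [Finset.prod_mul_distrib, Finset.prod_pow_eq_pow_sum]
  have hPnorm : ∀ β : Fin n → ℕ, ‖∏ j, ((ρ j : ℝ) : ℂ) ^ β j‖ = ∏ j, (ρ j) ^ β j := by
    intro β
    rw [norm_prod]
    apply Finset.prod_congr rfl
    intro j _
    rw [norm_pow, Complex.norm_real, Real.norm_eq_abs, abs_of_nonneg (hρ0 j)]
  have hξprodnn : ∀ β : Fin n → ℕ, (0:ℝ) ≤ ∏ j, (ξ j) ^ β j :=
    fun β => Finset.prod_nonneg (fun j _ => pow_nonneg (hξ0 j) _)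
  have hcbound : ∀ β : Fin n → ℕ, β ≠ α →
      ‖c β‖ ≤ 2 * θ ^ (N - k) * ((‖a β‖ + ‖b β‖) * ∏ j, (ξ j) ^ β j) := by
    intro β hβα
    by_cases hd : (∀ j, (N:ℤ) ∣ (β j : ℤ) - (α j : ℤ)) ∨ (∀ j, (N:ℤ) ∣ (β j : ℤ) + (α j : ℤ))
    · have hdeg : N - k ≤ ∑ j, β j := by
        rcases hd with hd1 | hd2
        · have hex : ∃ j, β j ≠ α j := by
            by_contra hcc
            push_neg at hcc
            exact hβα (funext hcc)
          obtain ⟨j2, hj2⟩ := hex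
          have hdvd : N ∣ ((β j2 : ℤ) - α j2).natAbs := by
            have := Int.natAbs_dvd_natAbs.mpr (hd1 j2)
            simpa using this
          have hne : ((β j2 : ℤ) - α j2).natAbs ≠ 0 := by
            intro hcc
            apply hj2
            omega
          have habs := Nat.le_of_dvd (Nat.pos_of_ne_zero hne) hdvd
          have hαj2 : α j2 ≤ k := hαk j2
          have hb2 : N - k ≤ β j2 := by
            rcases le_or_gt (β j2) (α j2) with hc | hc
            · exfalso
              have : ((β j2 : ℤ) - α j2).natAbs = α j2 - β j2 := by omega
              omega
            · have : ((β j2 : ℤ) - α j2).natAbs = β j2 - α j2 := by omega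
              omega
          calc N - k ≤ β j2 := hb2
          _ ≤ ∑ j, β j := Finset.single_le_sum (fun i _ => Nat.zero_le _) (Finset.mem_univ j2)
        · have hdvd := hd2 j0
          have hpos : (0:ℤ) < (β j0 : ℤ) + α j0 := by
            have := Nat.pos_of_ne_zero hj0
            omega
          have hle := Int.le_of_dvd hpos hdvd
          have hαj0 : α j0 ≤ k := hαk j0
          calc N - k ≤ β j0 := by omega
          _ ≤ ∑ j, β j := Finset.single_le_sum (fun i _ => Nat.zero_le _) (Finset.mem_univ j0)
      have hD1n : ‖D1 β‖ ≤ 1 := by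
        simp only [hD1def]
        split <;> norm_num
      have hD2n : ‖D2 β‖ ≤ 1 := by
        simp only [hD2def]
        split <;> norm_num
      have hbr : ‖a β * (u * D1 β + v * D2 β) + (starRingEnd ℂ) (b β) * (u * D2 β + v * D1 β)‖
          ≤ (‖a β‖ + ‖b β‖) * 2 := by
        have hx1 : ‖u * D1 β + v * D2 β‖ ≤ 2 := by
          refine (norm_add_le _ _).trans ?_
          rw [norm_mul, norm_mul, hu1, hv1, one_mul, one_mul]
          linarith
        have hx2 : ‖u * D2 β + v * D1 β‖ ≤ 2 := by
          refine (norm_add_le _ _).trans ?_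
          rw [norm_mul, norm_mul, hu1, hv1, one_mul, one_mul]
          linarith
        refine (norm_add_le _ _).trans ?_
        rw [norm_mul, norm_mul, RingHomIsometric.norm_map]
        have e1 : ‖a β‖ * ‖u * D1 β + v * D2 β‖ ≤ ‖a β‖ * 2 :=
          mul_le_mul_of_nonneg_left hx1 (norm_nonneg _)
        have e2 : ‖b β‖ * ‖u * D2 β + v * D1 β‖ ≤ ‖b β‖ * 2 :=
          mul_le_mul_of_nonneg_left hx2 (norm_nonneg _)
        linarith
      have hprnn : (0:ℝ) ≤ ∏ j, (ρ j) ^ β j :=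
        Finset.prod_nonneg (fun j _ => pow_nonneg (hρ0 j) _)
      calc ‖c β‖ = ‖∏ j, ((ρ j : ℝ):ℂ) ^ β j‖
            * ‖a β * (u * D1 β + v * D2 β) + (starRingEnd ℂ) (b β) * (u * D2 β + v * D1 β)‖ := by
            simp only [hcdef]
            rw [norm_mul]
      _ ≤ (∏ j, (ρ j) ^ β j) * ((‖a β‖ + ‖b β‖) * 2) := by
            rw [hPnorm]
            exact mul_le_mul_of_nonneg_left hbr hprnn
      _ = 2 * θ ^ (∑ j, β j) * ((‖a β‖ + ‖b β‖) * ∏ j, (ξ j) ^ β j) := by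
            rw [hρprod]
            ring
      _ ≤ 2 * θ ^ (N - k) * ((‖a β‖ + ‖b β‖) * ∏ j, (ξ j) ^ β j) := by
            have h6 : θ ^ (∑ j, β j) ≤ θ ^ (N - k) :=
              pow_le_pow_of_le_one hθ0.le hθ1.le hdeg
            have h7 : (0:ℝ) ≤ (‖a β‖ + ‖b β‖) * ∏ j, (ξ j) ^ β j :=
              mul_nonneg (by positivity) (hξprodnn β)
            have h8 : 2 * θ ^ (∑ j, β j) ≤ 2 * θ ^ (N - k) := by linarith
            exact mul_le_mul_of_nonneg_right h8 h7
    · have hD10 : D1 β = 0 := by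
        simp only [hD1def]
        rw [if_neg (fun hcc => hd (Or.inl hcc))]
      have hD20 : D2 β = 0 := by
        simp only [hD2def]
        rw [if_neg (fun hcc => hd (Or.inr hcc))]
      simp only [hcdef, hD10, hD20]
      have hz : (∏ j, ((ρ j : ℝ):ℂ) ^ β j) *
          (a β * (u * 0 + v * 0) + (starRingEnd ℂ) (b β) * (u * 0 + v * 0)) = 0 := by
        ring
      rw [hz, norm_zero]
      have h7 : (0:ℝ) ≤ (‖a β‖ + ‖b β‖) * ∏ j, (ξ j) ^ β j :=
        mul_nonneg (by positivity) (hξprodnn β)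
      positivity
  have htail : ‖S - c α‖ ≤ 2 * θ ^ (N - k) * M := by
    have h5 := hSsum.sub (hasSum_ite_eq α (c α))
    have hmaj : ∀ β : Fin n → ℕ, ‖c β - (if β = α then c α else 0)‖
        ≤ 2 * θ ^ (N - k) * ((‖a β‖ + ‖b β‖) * ∏ j, (ξ j) ^ β j) := by
      intro β
      by_cases hβ : β = α
      · subst hβ
        rw [if_pos rfl, sub_self, norm_zero]
        have h7 : (0:ℝ) ≤ (‖a β‖ + ‖b β‖) * ∏ j, (ξ j) ^ β j :=
          mul_nonneg (by positivity) (hξprodnn β)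
        positivity
      · rw [if_neg hβ, sub_zero]
        exact hcbound β hβ
    have hsummaj : Summable (fun β : Fin n → ℕ =>
        2 * θ ^ (N - k) * ((‖a β‖ + ‖b β‖) * ∏ j, (ξ j) ^ β j)) := hSM.mul_left _
    have hsumnorm : Summable (fun β : Fin n → ℕ => ‖c β - (if β = α then c α else 0)‖) :=
      Summable.of_nonneg_of_le (fun β => norm_nonneg _) hmaj hsummaj
    rw [← h5.tsum_eq]
    refine (norm_tsum_le_tsum_norm hsumnorm).trans ?_
    refine (Summable.tsum_le_tsum hmaj hsumnorm hsummaj).trans ?_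
    rw [tsum_mul_left]
  -- ## conclusion
  have hfinal : (‖a α‖ + ‖b α‖) * ∏ j, (ρ j) ^ α j = ‖c α‖ := by
    rw [hcα, norm_mul, hPnorm]
    rw [Complex.norm_real, Real.norm_eq_abs, abs_of_nonneg (by positivity)]
  calc (‖a α‖ + ‖b α‖) * ∏ j, (ρ j) ^ α j = ‖c α‖ := hfinal
  _ = ‖S - (S - c α)‖ := by rw [sub_sub_cancel]
  _ ≤ ‖S‖ + ‖S - c α‖ := norm_sub_le _ _
  _ ≤ Real.sqrt 2 + 2 * θ ^ (N - k) * M := add_le_add hSle htail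
  _ ≤ Real.sqrt 2 + ε := by
      have h6 : θ ^ (N - k) ≤ θ ^ j1 :=
        pow_le_pow_of_le_one hθ0.le hθ1.le (by omega)
      have h7 : 2 * θ ^ (N - k) * M ≤ 2 * θ ^ j1 * M := by
        apply mul_le_mul_of_nonneg_right _ hM0
        linarith
      linarith







set_option maxHeartbeats 1000000 in
lemma per_alpha
    {n : ℕ} {p : ℝ≥0∞} (hp : p ≠ ∞) (hP1 : 1 ≤ p.toReal)
    (f h g : (Fin n → ℂ) → ℂ) (a b : (Fin n → ℕ) → ℂ)
    (hfd : ∀ z : Fin n → ℂ, pnormE p z < 1 → f z = h z + (starRingEnd ℂ) (g z))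
    (hha : ∀ z : Fin n → ℂ, pnormE p z < 1 →
      HasSum (fun α : Fin n → ℕ => a α * ∏ k, z k ^ α k) (h z))
    (hgb : ∀ z : Fin n → ℂ, pnormE p z < 1 →
      HasSum (fun α : Fin n → ℕ => b α * ∏ k, z k ^ α k) (g z))
    (hmap : ∀ z : Fin n → ℂ, pnormE p z < 1 → ‖f z‖ ≤ 1)
    (α : Fin n → ℕ) (hα : α ≠ 0) (z : Fin n → ℂ) :
    (‖a α‖ + ‖b α‖) * ∏ j, ‖z j‖ ^ α j ≤
      Real.sqrt 2 * (Real.exp 1 ^ (∑ j, α j - 1) * ((1000:ℝ)/999) ^ (∑ j, α j)) *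
        ((Nat.multinomial Finset.univ α : ℝ) * ∏ j, ‖z j‖ ^ α j) := by
  classical
  have hP0 : (0:ℝ) < p.toReal := lt_of_lt_of_le one_pos hP1
  set P := p.toReal with hPdef
  set k := ∑ j, α j with hkdef
  have hk1 : 1 ≤ k := by
    rcases Nat.eq_zero_or_pos k with h0 | h0
    · exfalso
      apply hα
      funext j
      have h0' : ∑ j, α j = 0 := h0
      exact Finset.sum_eq_zero_iff.mp h0' j (Finset.mem_univ j)
    · exact h0
  have hkR : (0:ℝ) < (k:ℝ) := by exact_mod_cast hk1
  have hαk : ∀ j, α j ≤ k := fun j =>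
    Finset.single_le_sum (f := fun j => α j) (fun i _ => Nat.zero_le _) (Finset.mem_univ j)
  set σ : Fin n → ℝ := fun j => ((α j : ℝ) / k) ^ (1 / P) with hσdef
  have hσ0 : ∀ j, 0 ≤ σ j := fun j => Real.rpow_nonneg (by positivity) _
  set t : ℝ := 999/1000 with htdef
  set t' : ℝ := 1999/2000 with ht'def
  set θ : ℝ := t / t' with hθdef
  have hθ0 : 0 < θ := by rw [hθdef, htdef, ht'def]; norm_num
  have hθ1 : θ < 1 := by rw [hθdef, htdef, ht'def]; norm_num
  set ξ : Fin n → ℝ := fun j => t' * σ j with hξdef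
  have hξ0 : ∀ j, 0 ≤ ξ j := fun j => mul_nonneg (by rw [ht'def]; norm_num) (hσ0 j)
  have hσP : ∀ j, (σ j) ^ P = (α j : ℝ) / k := by
    intro j
    rw [hσdef, ← Real.rpow_mul (by positivity), one_div, inv_mul_cancel₀ hP0.ne',
      Real.rpow_one]
  have hξball : pnormE p (fun j => ((ξ j : ℝ) : ℂ)) < 1 := by
    rw [pnormE_eq hp]
    have hsum : (∑ j, ‖(((ξ j : ℝ)) : ℂ)‖ ^ P) = t' ^ P := by
      have he1 : ∀ j : Fin n, ‖(((ξ j : ℝ)) : ℂ)‖ ^ P = t' ^ P * ((α j : ℝ) / k) := by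
        intro j
        rw [Complex.norm_real, Real.norm_eq_abs, abs_of_nonneg (hξ0 j), hξdef]
        rw [Real.mul_rpow (by rw [ht'def]; norm_num) (hσ0 j), hσP j]
      rw [Finset.sum_congr rfl (fun j _ => he1 j), ← Finset.mul_sum]
      have he2 : (∑ j, ((α j : ℝ) / k)) = 1 := by
        rw [← Finset.sum_div]
        rw [show (∑ j, ((α j):ℝ)) = ((∑ j, α j : ℕ) : ℝ) by push_cast; rfl]
        rw [← hkdef]
        field_simp
      rw [he2, mul_one]
    rw [hsum, ← Real.rpow_mul (by rw [ht'def]; norm_num), mul_one_div,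
      div_self hP0.ne', Real.rpow_one]
    rw [ht'def]
    norm_num
  have hcb := coeff_bound hp hP1 f h g a b hfd hha hgb hmap α hα ξ hξ0 hξball θ hθ0 hθ1
  -- rewrite θ * ξ j = t * σ j
  have hθξ : ∀ j, θ * ξ j = t * σ j := by
    intro j
    rw [hθdef, hξdef, htdef, ht'def]
    ring
  rw [Finset.prod_congr rfl (fun j _ => by rw [hθξ j]) ] at hcb
  -- hcb : (‖a α‖ + ‖b α‖) * ∏ j, (t * σ j) ^ α j ≤ √2
  set A : ℝ := ∏ j, ((α j : ℝ)) ^ (α j) with hAdef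
  have hA0 : (0:ℝ) < A := by
    rw [hAdef]
    apply Finset.prod_pos
    intro j _
    rcases Nat.eq_zero_or_pos (α j) with hc | hc
    · simp [hc]
    · exact pow_pos (by exact_mod_cast hc) _
  have hAK : A ≤ ((k:ℝ)) ^ k := by
    rw [hAdef]
    calc ∏ j, ((α j : ℝ)) ^ (α j) ≤ ∏ j, ((k:ℝ)) ^ (α j) := by
          apply Finset.prod_le_prod
          · intro j _
            positivity
          · intro j _
            apply pow_le_pow_left₀ (by positivity)
            exact_mod_cast hαk j
    _ = ((k:ℝ)) ^ k := by
        rw [Finset.prod_pow_eq_pow_sum, ← hkdef]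
  have hQ : ∏ j, σ j ^ α j = (A / ((k:ℝ)) ^ k) ^ (1 / P) := by
    have e3 : ∀ j : Fin n, σ j ^ α j = (((α j : ℝ) / k) ^ (α j)) ^ (1 / P) := by
      intro j
      rw [hσdef, ← Real.rpow_natCast (((α j : ℝ) / k) ^ (1/P)) (α j),
        ← Real.rpow_mul (by positivity), mul_comm, Real.rpow_mul (by positivity),
        Real.rpow_natCast]
    rw [Finset.prod_congr rfl (fun j _ => e3 j)]
    rw [Real.finset_prod_rpow Finset.univ _ (fun j _ => by positivity) (1/P)]
    congr 1
    simp only [div_pow]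
    rw [Finset.prod_div_distrib, Finset.prod_pow_eq_pow_sum, ← hkdef, hAdef]
  have hC2 : (((k:ℝ)) ^ k / A) ^ (1 / P)
      ≤ Real.exp 1 ^ (k - 1) * ((Nat.multinomial Finset.univ α : ℕ) : ℝ) := by
    have h1le : (1:ℝ) ≤ ((k:ℝ)) ^ k / A := (one_le_div hA0).mpr hAK
    have hr1 : (((k:ℝ)) ^ k / A) ^ (1 / P) ≤ (((k:ℝ)) ^ k / A) ^ (1:ℝ) := by
      apply Real.rpow_le_rpow_of_exponent_le h1le
      rw [div_le_one hP0]
      exact hP1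
    rw [Real.rpow_one] at hr1
    refine hr1.trans ?_
    rw [div_le_iff₀ hA0]
    have hspec0 := Nat.multinomial_spec Finset.univ α
    have hspec : ((Nat.factorial k : ℕ) : ℝ)
        = (∏ j, ((Nat.factorial (α j) : ℕ) : ℝ)) * ((Nat.multinomial Finset.univ α : ℕ) : ℝ) := by
      rw [hkdef]
      exact_mod_cast hspec0.symm
    calc ((k:ℝ)) ^ k ≤ Real.exp 1 ^ (k - 1) * ((Nat.factorial k : ℕ) : ℝ) := pow_self_le k hk1
    _ = Real.exp 1 ^ (k - 1) * ((∏ j, ((Nat.factorial (α j) : ℕ) : ℝ))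
        * ((Nat.multinomial Finset.univ α : ℕ) : ℝ)) := by rw [hspec]
    _ ≤ Real.exp 1 ^ (k - 1) * (A * ((Nat.multinomial Finset.univ α : ℕ) : ℝ)) := by
        apply mul_le_mul_of_nonneg_left _ (by positivity)
        apply mul_le_mul_of_nonneg_right _ (by positivity)
        rw [hAdef]
        refine Finset.prod_le_prod (fun j _ => by positivity) ?_
        intro j _
        exact_mod_cast Nat.factorial_le_pow (α j)
    _ = Real.exp 1 ^ (k - 1) * ((Nat.multinomial Finset.univ α : ℕ) : ℝ) * A := by ring
  -- final assembly
  have hkk0 : (0:ℝ) < ((k:ℝ)) ^ k := pow_pos hkR k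
  have hQpos : (0:ℝ) < ∏ j, σ j ^ α j := by
    rw [hQ]
    exact Real.rpow_pos_of_pos (div_pos hA0 hkk0) _
  have ht0 : (0:ℝ) < t := by rw [htdef]; norm_num
  have hsplit : ∏ j, (t * σ j) ^ α j = t ^ k * ∏ j, σ j ^ α j := by
    simp only [mul_pow]
    rw [Finset.prod_mul_distrib, Finset.prod_pow_eq_pow_sum, ← hkdef]
  rw [hsplit] at hcb
  have hZ0 : (0:ℝ) ≤ ∏ j, ‖z j‖ ^ α j :=
    Finset.prod_nonneg (fun j _ => pow_nonneg (norm_nonneg _) _)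
  have hQinv : (∏ j, σ j ^ α j)⁻¹ = (((k:ℝ)) ^ k / A) ^ (1 / P) := by
    rw [hQ, ← Real.inv_rpow (by positivity), inv_div]
  have hcoef : ‖a α‖ + ‖b α‖ ≤ Real.sqrt 2 * (Real.exp 1 ^ (k - 1) * ((1000:ℝ)/999) ^ k)
      * ((Nat.multinomial Finset.univ α : ℕ) : ℝ) := by
    have h2 : ‖a α‖ + ‖b α‖ ≤ Real.sqrt 2 / (t ^ k * ∏ j, σ j ^ α j) := by
      rw [le_div_iff₀ (by positivity)]
      exact hcb
    refine h2.trans ?_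
    rw [div_eq_mul_inv, mul_inv, hQinv]
    have htinv : (t ^ k)⁻¹ = ((1000:ℝ)/999) ^ k := by
      rw [htdef, ← inv_pow]
      norm_num
    rw [htinv]
    calc Real.sqrt 2 * (((1000:ℝ)/999) ^ k * (((k:ℝ)) ^ k / A) ^ (1 / P))
        ≤ Real.sqrt 2 * (((1000:ℝ)/999) ^ k
          * (Real.exp 1 ^ (k - 1) * ((Nat.multinomial Finset.univ α : ℕ) : ℝ))) := by
          apply mul_le_mul_of_nonneg_left _ (Real.sqrt_nonneg 2)
          apply mul_le_mul_of_nonneg_left hC2 (by positivity)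
    _ = Real.sqrt 2 * (Real.exp 1 ^ (k - 1) * ((1000:ℝ)/999) ^ k)
          * ((Nat.multinomial Finset.univ α : ℕ) : ℝ) := by ring
  calc (‖a α‖ + ‖b α‖) * ∏ j, ‖z j‖ ^ α j
      ≤ (Real.sqrt 2 * (Real.exp 1 ^ (k - 1) * ((1000:ℝ)/999) ^ k)
        * ((Nat.multinomial Finset.univ α : ℕ) : ℝ)) * ∏ j, ‖z j‖ ^ α j :=
        mul_le_mul_of_nonneg_right hcoef hZ0
  _ = Real.sqrt 2 * (Real.exp 1 ^ (k - 1) * ((1000:ℝ)/999) ^ k)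
        * (((Nat.multinomial Finset.univ α : ℕ) : ℝ) * ∏ j, ‖z j‖ ^ α j) := by ring


end Stmt13Aux

open Stmt13Aux in
theorem stmt13 (n : ℕ) (hn : 1 ≤ n) (p : ℝ≥0∞) (hp1 : 1 ≤ p) (hp2 : p < 2)
    (f h g : (Fin n → ℂ) → ℂ) (a b : (Fin n → ℕ) → ℂ) (hb0 : b 0 = 0)
    (hh : DifferentiableOn ℂ h {z | pnormE p z < 1})
    (hg : DifferentiableOn ℂ g {z | pnormE p z < 1})
    (hg0 : g 0 = 0)
    (hfd : ∀ z : Fin n → ℂ, pnormE p z < 1 → f z = h z + (starRingEnd ℂ) (g z))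
    (hha : ∀ z : Fin n → ℂ, pnormE p z < 1 →
      HasSum (fun α : Fin n → ℕ => a α * ∏ k, z k ^ α k) (h z))
    (hgb : ∀ z : Fin n → ℂ, pnormE p z < 1 →
      HasSum (fun α : Fin n → ℕ => b α * ∏ k, z k ^ α k) (g z))
    (hmap : ∀ z : Fin n → ℂ, pnormE p z < 1 → ‖f z‖ ≤ 1)
    (z : Fin n → ℂ)
    (hz : pnormE p z ≤ 1 / (3 * Real.exp (1 / 3) * (n : ℝ) ^ (1 - (p.toReal)⁻¹))) :
    -- the (nonnegative-term) Bohr sum over all multi-indices with `|α| ≥ 1`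
    -- is at most 1, i.e. every finite partial sum is at most 1
    ∀ s : Finset (Fin n → ℕ), 0 ∉ s →
      ∑ α ∈ s, (‖a α‖ + ‖b α‖) * ‖∏ k, z k ^ α k‖ ≤ 1 := by
  classical
  intro s hs0
  have hpinf : p ≠ ∞ := hp2.ne_top
  have hP1 : 1 ≤ p.toReal := by
    have := ENNReal.toReal_mono hpinf hp1
    simpa using this
  have hP0 : (0:ℝ) < p.toReal := lt_of_lt_of_le one_pos hP1
  set X := ∑ j, ‖z j‖ with hXdef
  have hX0 : (0:ℝ) ≤ X := Finset.sum_nonneg (fun j _ => norm_nonneg _)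
  have hn0 : (0:ℝ) < (n:ℝ) := by exact_mod_cast hn
  have hHolder : X ≤ (n:ℝ) ^ (1 - (p.toReal)⁻¹) * pnormE p z := by
    set P := p.toReal with hPdef
    have hJ := Real.rpow_arith_mean_le_arith_mean_rpow Finset.univ
      (fun _ : Fin n => 1/(n:ℝ)) (fun j => ‖z j‖) (fun i _ => by positivity)
      (by rw [Finset.sum_const, Finset.card_univ, Fintype.card_fin, nsmul_eq_mul]
          field_simp) (fun i _ => norm_nonneg _) hP1
    have hl : (∑ j, (1/(n:ℝ)) * ‖z j‖) = X / n := by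
      rw [← Finset.mul_sum, hXdef]
      ring
    have hr : (∑ j, (1/(n:ℝ)) * ‖z j‖ ^ P) = (1/(n:ℝ)) * ∑ j, ‖z j‖ ^ P := by
      rw [← Finset.mul_sum]
    rw [hl, hr] at hJ
    have hsumnn : (0:ℝ) ≤ ∑ j, ‖z j‖ ^ P :=
      Finset.sum_nonneg (fun j _ => Real.rpow_nonneg (norm_nonneg _) _)
    have h2 : X / n ≤ ((1/(n:ℝ)) * ∑ j, ‖z j‖ ^ P) ^ (1/P) := by
      have h3 : ((X/(n:ℝ)) ^ P) ^ (1/P) ≤ ((1/(n:ℝ)) * ∑ j, ‖z j‖ ^ P) ^ (1/P) :=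
        Real.rpow_le_rpow (Real.rpow_nonneg (by positivity) _) hJ (by positivity)
      rwa [← Real.rpow_mul (by positivity), mul_one_div, div_self hP0.ne',
        Real.rpow_one] at h3
    rw [pnormE_eq hpinf]
    calc X = (n:ℝ) * (X / n) := by field_simp
    _ ≤ (n:ℝ) * ((1/(n:ℝ)) * ∑ j, ‖z j‖ ^ P) ^ (1/P) :=
        mul_le_mul_of_nonneg_left h2 hn0.le
    _ = (n:ℝ) ^ (1 - P⁻¹) * (∑ j, ‖z j‖ ^ P) ^ (1/P) := by
        rw [Real.mul_rpow (by positivity) hsumnn]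
        rw [show (1/(n:ℝ)) = (n:ℝ) ^ (-1:ℝ) from by rw [Real.rpow_neg_one, one_div]]
        rw [← Real.rpow_mul hn0.le]
        rw [show (n:ℝ) * ((n:ℝ) ^ (-1 * (1/P)) * (∑ j, ‖z j‖ ^ P) ^ (1/P))
          = ((n:ℝ) ^ (1:ℝ) * (n:ℝ) ^ (-1 * (1/P))) * (∑ j, ‖z j‖ ^ P) ^ (1/P) from by
            rw [Real.rpow_one]; ring]
        rw [← Real.rpow_add hn0]
        congr 2
        rw [one_div]
        ring
  have hnr0 : (0:ℝ) < (n:ℝ) ^ (1 - (p.toReal)⁻¹) := Real.rpow_pos_of_pos hn0 _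
  have hE3 : (0:ℝ) < Real.exp (1/3) := Real.exp_pos _
  have hXr : X ≤ 1 / (3 * Real.exp (1/3)) := by
    calc X ≤ (n:ℝ) ^ (1 - (p.toReal)⁻¹) * pnormE p z := hHolder
    _ ≤ (n:ℝ) ^ (1 - (p.toReal)⁻¹)
        * (1 / (3 * Real.exp (1/3) * (n:ℝ) ^ (1 - (p.toReal)⁻¹))) :=
        mul_le_mul_of_nonneg_left hz hnr0.le
    _ = 1 / (3 * Real.exp (1/3)) := by
        field_simp
  set E := Real.exp 1 with hEdef
  have hE : (0:ℝ) < E := Real.exp_pos 1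
  set q : ℝ := E * X * (1000/999) with hqdef
  have hq0 : (0:ℝ) ≤ q := by positivity
  have hq65 : q ≤ 13/20 := by
    have h1 : Real.exp (2/3) ^ (3:ℕ) = Real.exp 2 := by
      rw [← Real.exp_nat_mul]
      norm_num
    have h2 : Real.exp 2 = Real.exp 1 ^ (2:ℕ) := by
      rw [← Real.exp_nat_mul]
      norm_num
    have he2 : Real.exp 2 < 7.3890561 := by
      rw [h2]
      nlinarith [Real.exp_one_lt_d9, Real.exp_pos 1]
    have he23 : Real.exp (2/3) ≤ 1.948 := by
      have hx3 : Real.exp (2/3) ^ (3:ℕ) < (1.948:ℝ) ^ (3:ℕ) := by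
        rw [h1]
        calc Real.exp 2 < 7.3890561 := he2
        _ ≤ (1.948:ℝ) ^ (3:ℕ) := by norm_num
      exact le_of_lt (lt_of_pow_lt_pow_left₀ 3 (by norm_num) hx3)
    have hEsplit : E = Real.exp (2/3) * Real.exp (1/3) := by
      rw [hEdef, ← Real.exp_add]
      norm_num
    calc q = E * X * (1000/999) := rfl
    _ ≤ E * (1/(3 * Real.exp (1/3))) * (1000/999) := by
        apply mul_le_mul_of_nonneg_right _ (by norm_num)
        exact mul_le_mul_of_nonneg_left hXr hE.le
    _ = Real.exp (2/3) * (1000/2997) := by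
        rw [hEsplit]
        field_simp
        ring
    _ ≤ 1.948 * (1000/2997) := mul_le_mul_of_nonneg_right he23 (by norm_num)
    _ ≤ 13/20 := by norm_num
  have hq1 : q < 1 := lt_of_le_of_lt hq65 (by norm_num)
  -- per α bound
  have hper : ∀ α ∈ s, (‖a α‖ + ‖b α‖) * ‖∏ j, z j ^ α j‖
      ≤ Real.sqrt 2 * (E ^ (∑ j, α j - 1) * ((1000:ℝ)/999) ^ (∑ j, α j))
        * (((Nat.multinomial Finset.univ α : ℕ) : ℝ) * ∏ j, ‖z j‖ ^ α j) := by
    intro α hαs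
    have hα0 : α ≠ 0 := fun hc => hs0 (hc ▸ hαs)
    have hnp : ‖∏ j, z j ^ α j‖ = ∏ j, ‖z j‖ ^ α j := by
      rw [norm_prod]
      exact Finset.prod_congr rfl (fun j _ => norm_pow _ _)
    rw [hnp]
    exact per_alpha hpinf hP1 f h g a b hfd hha hgb hmap α hα0 z
  set T := s.image (fun α : Fin n → ℕ => ∑ j, α j) with hTdef
  have hT1 : ∀ m ∈ T, 1 ≤ m := by
    intro m hm
    obtain ⟨α0, hα0s, hα0m⟩ := Finset.mem_image.mp hm
    rcases Nat.eq_zero_or_pos m with h0 | h0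
    · exfalso
      apply hs0
      have hz0 : α0 = 0 := by
        funext j
        have hsum0 : ∑ j, α0 j = 0 := by rw [hα0m, h0]
        exact Finset.sum_eq_zero_iff.mp hsum0 j (Finset.mem_univ j)
      exact hz0 ▸ hα0s
    · exact h0
  have hfib := Finset.sum_fiberwise_of_maps_to (g := fun α : Fin n → ℕ => ∑ j, α j)
    (t := T) (fun α hα => Finset.mem_image_of_mem _ hα)
    (fun α => (‖a α‖ + ‖b α‖) * ‖∏ j, z j ^ α j‖)
  rw [← hfib]
  have hfiber : ∀ m ∈ T, (∑ α ∈ s.filter (fun α : Fin n → ℕ => ∑ j, α j = m),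
      (‖a α‖ + ‖b α‖) * ‖∏ j, z j ^ α j‖) ≤ (Real.sqrt 2 / E) * q ^ m := by
    intro m hm
    have hm1 := hT1 m hm
    calc ∑ α ∈ s.filter (fun α : Fin n → ℕ => ∑ j, α j = m),
        (‖a α‖ + ‖b α‖) * ‖∏ j, z j ^ α j‖
        ≤ ∑ α ∈ s.filter (fun α : Fin n → ℕ => ∑ j, α j = m),
          Real.sqrt 2 * (E ^ (m - 1) * ((1000:ℝ)/999) ^ m)
            * (((Nat.multinomial Finset.univ α : ℕ) : ℝ) * ∏ j, ‖z j‖ ^ α j) := by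
          apply Finset.sum_le_sum
          intro α hαf
          have hdeg : ∑ j, α j = m := (Finset.mem_filter.mp hαf).2
          have hx := hper α (Finset.mem_filter.mp hαf).1
          rw [hdeg] at hx
          exact hx
    _ = Real.sqrt 2 * (E ^ (m - 1) * ((1000:ℝ)/999) ^ m)
          * ∑ α ∈ s.filter (fun α : Fin n → ℕ => ∑ j, α j = m),
            (((Nat.multinomial Finset.univ α : ℕ) : ℝ) * ∏ j, ‖z j‖ ^ α j) := by
          rw [Finset.mul_sum]
    _ ≤ Real.sqrt 2 * (E ^ (m - 1) * ((1000:ℝ)/999) ^ m) * X ^ m := by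
          apply mul_le_mul_of_nonneg_left _ (by positivity)
          rw [hXdef, Finset.sum_pow_eq_sum_piAntidiag]
          apply Finset.sum_le_sum_of_subset_of_nonneg
          · intro α hαf
            rw [Finset.mem_piAntidiag]
            exact ⟨(Finset.mem_filter.mp hαf).2, fun i _ => Finset.mem_univ i⟩
          · intro α _ _
            exact mul_nonneg (by positivity)
              (Finset.prod_nonneg (fun j _ => pow_nonneg (norm_nonneg _) _))
    _ = (Real.sqrt 2 / E) * q ^ m := by
          have hEm : E ^ (m - 1) * E = E ^ m := by
            rw [← pow_succ]
            congr 1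
            omega
          rw [hqdef, mul_pow, mul_pow, div_mul_eq_mul_div, eq_div_iff hE.ne']
          linear_combination (Real.sqrt 2 * ((1000:ℝ)/999) ^ m * X ^ m) * hEm
  calc ∑ m ∈ T, ∑ α ∈ s.filter (fun α : Fin n → ℕ => ∑ j, α j = m),
      (‖a α‖ + ‖b α‖) * ‖∏ j, z j ^ α j‖
      ≤ ∑ m ∈ T, (Real.sqrt 2 / E) * q ^ m := Finset.sum_le_sum hfiber
  _ = (Real.sqrt 2 / E) * ∑ m ∈ T, q ^ m := by rw [Finset.mul_sum]
  _ ≤ (Real.sqrt 2 / E) * (q * (1 - q)⁻¹) := by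
      apply mul_le_mul_of_nonneg_left _ (by positivity)
      set gq : ℕ → ℝ := fun m => if m = 0 then 0 else q ^ m with hgdef
      have hgnn : ∀ m : ℕ, 0 ≤ gq m := by
        intro m
        rw [hgdef]
        dsimp only
        split
        · norm_num
        · positivity
      have hgle : ∀ m : ℕ, gq m ≤ q ^ m := by
        intro m
        rw [hgdef]
        dsimp only
        split
        · positivity
        · exact le_refl _
      have hgsummable : Summable gq :=
        Summable.of_nonneg_of_le hgnn hgle (summable_geometric_of_lt_one hq0 hq1)
      have htsum : ∑' m, gq m = q * (1 - q)⁻¹ := by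
        rw [Summable.tsum_eq_zero_add hgsummable]
        have hg0' : gq 0 = 0 := by rw [hgdef]; norm_num
        have hgs : ∀ m : ℕ, gq (m + 1) = q * q ^ m := by
          intro m
          rw [hgdef]
          dsimp only
          rw [if_neg (Nat.succ_ne_zero m), pow_succ]
          ring
        rw [hg0', zero_add, tsum_congr hgs, tsum_mul_left,
          tsum_geometric_of_lt_one hq0 hq1]
      calc ∑ m ∈ T, q ^ m = ∑ m ∈ T, gq m := by
            apply Finset.sum_congr rfl
            intro m hm
            rw [hgdef]
            dsimp only
            rw [if_neg (by have := hT1 m hm; omega)]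
      _ ≤ ∑' m, gq m := Summable.sum_le_tsum T (fun m _ => hgnn m) hgsummable
      _ = q * (1 - q)⁻¹ := htsum
  _ ≤ 1 := by
      have hs2 : Real.sqrt 2 ≤ 1.41422 := by
        rw [show (1.41422:ℝ) = Real.sqrt (1.41422 ^ 2) from
          (Real.sqrt_sq (by norm_num)).symm]
        exact Real.sqrt_le_sqrt (by norm_num)
      have hE9 : (2.7182818283:ℝ) < E := Real.exp_one_gt_d9
      have hqq : q * (1 - q)⁻¹ ≤ 13/7 := by
        have h1q : (7:ℝ)/20 ≤ 1 - q := by linarith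
        rw [← div_eq_mul_inv, div_le_iff₀ (by linarith)]
        linarith
      calc (Real.sqrt 2 / E) * (q * (1 - q)⁻¹) ≤ (Real.sqrt 2 / E) * (13/7) :=
            mul_le_mul_of_nonneg_left hqq (by positivity)
      _ ≤ 1 := by
          rw [div_mul_eq_mul_div, div_le_one hE]
          nlinarith [hs2, hE9, Real.sqrt_nonneg 2]
end

section
/- Let p ∈ [1,∞] and n = 1, so 𝔹_{ℓ_p^1} = 𝔻. If f(z) = Σ_{j=0}^{∞} a_j z^j + Σ_{j=1}^{∞} conj(b_j) z̄^j is a harmonic function on 𝔻 with sup_{z ∈ 𝔻} Re(f(z)) ≤ 1 and f(0) ≥ 0 (f(0) real nonnegative), then Σ_{j=0}^{∞} |(a_j + b_j) z^j| ≤ 1 for all |z| ≤ 1/3. Moreover, the constant 1/3 is sharp: for every r > 1/3 there is such a function (namely f(z) = −2z/(1−z)) for which Σ_j |a_j + b_j| r^j > 1. -/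
noncomputable section BohrAux
open Complex Real MeasureTheory intervalIntegral

lemma intExp (m : ℤ) :
    (∫ θ in (0:ℝ)..(2*Real.pi), Complex.exp ((m:ℂ) * θ * Complex.I)) =
      if m = 0 then (2*Real.pi : ℂ) else 0 := by
  rcases eq_or_ne m 0 with hm | hm
  · simp [hm]
  · have hc : (m:ℂ) * Complex.I ≠ 0 := by
      simp [Complex.I_ne_zero, hm]
    have h0 : ∀ θ : ℝ, (m:ℂ) * θ * Complex.I = ((m:ℂ) * Complex.I) * θ := by intro θ; ring
    simp only [h0]
    rw [integral_exp_mul_complex hc]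
    push_cast
    rw [show (m:ℂ) * Complex.I * (2*(Real.pi:ℂ)) = (m:ℤ) * (2*(Real.pi:ℂ)*Complex.I) by push_cast; ring]
    rw [Complex.exp_int_mul_two_pi_mul_I]
    simp [hm]

lemma summ (c : ℕ → ℂ) (F : ℂ → ℂ)
    (hF : ∀ z ∈ Metric.ball (0:ℂ) 1, HasSum (fun j : ℕ => c j * z ^ j) (F z))
    (ρ : ℝ) (hρ0 : 0 ≤ ρ) (hρ1 : ρ < 1) :
    Summable (fun k : ℕ => ‖c k‖ * ρ^k) := by
  set σ : ℝ := (1+ρ)/2 with hσ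
  have hσ0 : 0 < σ := by positivity
  have hρσ : ρ < σ := by simp only [hσ]; linarith
  have hσ1 : σ < 1 := by simp only [hσ]; linarith
  clear_value σ
  have hz : ((σ:ℂ)) ∈ Metric.ball (0:ℂ) 1 := by
    simp only [Metric.mem_ball, dist_zero_right, Complex.norm_real,
      Real.norm_eq_abs, _root_.abs_of_nonneg hσ0.le]
    exact hσ1
  have hs : Summable (fun k : ℕ => c k * (σ:ℂ)^k) := (hF _ hz).summable
  obtain ⟨M, hM⟩ := hs.tendsto_atTop_zero.norm.bddAbove_range
  have hM : ∀ k, ‖c k‖ * σ^k ≤ M := by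
    intro k
    have := hM ⟨k, rfl⟩
    simpa [norm_mul, norm_pow, Complex.norm_real, Real.norm_eq_abs,
      _root_.abs_of_nonneg hσ0.le] using this
  have hgeo : Summable (fun k : ℕ => M * (ρ/σ)^k) := by
    refine Summable.mul_left M (summable_geometric_of_lt_one (by positivity) ?_)
    rw [div_lt_one hσ0]; exact hρσ
  refine Summable.of_nonneg_of_le (fun k => by positivity) (fun k => ?_) hgeo
  have h1 : ‖c k‖ * ρ^k = (‖c k‖ * σ^k) * (ρ/σ)^k := by
    have hσne : σ ≠ 0 := hσ0.ne'
    rw [mul_assoc, ← mul_pow, mul_div_cancel₀ _ hσne]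
  rw [h1]
  exact mul_le_mul_of_nonneg_right (hM k) (by positivity)

lemma gen (c : ℕ → ℂ) (F : ℂ → ℂ)
    (hF : ∀ z ∈ Metric.ball (0:ℂ) 1, HasSum (fun j : ℕ => c j * z ^ j) (F z))
    (ρ : ℝ) (hρ0 : 0 < ρ) (hρ1 : ρ < 1) (n : ℤ) :
    (∫ θ in (0:ℝ)..(2*Real.pi), F ((ρ:ℂ) * Complex.exp (θ * Complex.I))
        * Complex.exp ((n:ℂ) * θ * Complex.I)) =
      ∑' k : ℕ, c k * (ρ:ℂ)^k * (if (k:ℤ) + n = 0 then (2*Real.pi:ℂ) else 0) := by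
  set G : ℕ → ℝ → ℂ := fun k θ =>
    c k * (ρ:ℂ)^k * Complex.exp ((((k:ℤ) + n : ℤ):ℂ) * θ * Complex.I) with hG
  have h2π : (0:ℝ) ≤ 2*Real.pi := by positivity
  have hpt : ∀ θ : ℝ, F ((ρ:ℂ) * Complex.exp (θ * Complex.I))
      * Complex.exp ((n:ℂ) * θ * Complex.I) = ∑' k, G k θ := by
    intro θ
    have hz : (ρ:ℂ) * Complex.exp (θ * Complex.I) ∈ Metric.ball (0:ℂ) 1 := by
      simp only [Metric.mem_ball, dist_zero_right, norm_mul, Complex.norm_real,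
        Real.norm_eq_abs, _root_.abs_of_nonneg hρ0.le]
      rw [Complex.norm_exp_ofReal_mul_I]
      simpa using hρ1
    have hs := (hF _ hz).mul_right (Complex.exp ((n:ℂ) * θ * Complex.I))
    have heq : (fun k : ℕ => c k * ((ρ:ℂ) * Complex.exp (θ * Complex.I))^k
        * Complex.exp ((n:ℂ) * θ * Complex.I)) = fun k => G k θ := by
      funext k
      have h1 : ((ρ:ℂ) * Complex.exp ((θ:ℂ)*Complex.I))^k
          = (ρ:ℂ)^k * Complex.exp ((k:ℂ)*θ*Complex.I) := by
        rw [mul_pow]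
        congr 1
        rw [← Complex.exp_nat_mul]
        ring_nf
      rw [h1, hG]
      beta_reduce
      rw [show ((((k:ℤ)+n:ℤ):ℂ) * θ * Complex.I)
          = (k:ℂ)*θ*Complex.I + (n:ℂ)*θ*Complex.I by push_cast; ring, Complex.exp_add]
      ring
    rw [heq] at hs
    exact hs.tsum_eq.symm
  have hcont : ∀ k, Continuous (G k) := by
    intro k
    apply Continuous.mul continuous_const
    exact Complex.continuous_exp.comp (by fun_prop)
  have hint : ∀ k, IntegrableOn (G k) (Set.Ioc 0 (2*Real.pi)) := by
    intro k
    exact (hcont k).integrableOn_Ioc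
  have hnorm : ∀ k θ, ‖G k θ‖ = ‖c k‖ * ρ^k := by
    intro k θ
    simp only [hG, norm_mul, norm_pow, Complex.norm_real, Real.norm_eq_abs,
      _root_.abs_of_nonneg hρ0.le]
    rw [show ((((k:ℤ) + n : ℤ):ℂ) * θ * Complex.I) = ((((k:ℤ)+n : ℤ) * θ : ℝ):ℂ) * Complex.I by
      push_cast; ring]
    rw [Complex.norm_exp_ofReal_mul_I]
    ring
  have hsum : Summable (fun k => ∫ θ in Set.Ioc (0:ℝ) (2*Real.pi), ‖G k θ‖) := by
    have : (fun k => ∫ θ in Set.Ioc (0:ℝ) (2*Real.pi), ‖G k θ‖)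
        = fun k => (2*Real.pi) * (‖c k‖ * ρ^k) := by
      funext k
      simp only [hnorm]
      rw [setIntegral_const]
      simp [Real.volume_Ioc, ENNReal.toReal_ofReal h2π, Real.pi_pos.le]
      try ring
    rw [this]
    exact (summ c F hF ρ hρ0.le hρ1).mul_left _
  rw [intervalIntegral.integral_of_le h2π]
  calc ∫ θ in Set.Ioc (0:ℝ) (2*Real.pi),
          F ((ρ:ℂ) * Complex.exp (θ * Complex.I)) * Complex.exp ((n:ℂ) * θ * Complex.I)
      = ∫ θ in Set.Ioc (0:ℝ) (2*Real.pi), ∑' k, G k θ := by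
        apply setIntegral_congr_fun (measurableSet_Ioc)
        intro θ _
        exact hpt θ
    _ = ∑' k, ∫ θ in Set.Ioc (0:ℝ) (2*Real.pi), G k θ :=
        (integral_tsum_of_summable_integral_norm hint hsum).symm
    _ = ∑' k : ℕ, c k * (ρ:ℂ)^k * (if (k:ℤ) + n = 0 then (2*Real.pi:ℂ) else 0) := by
        apply tsum_congr
        intro k
        rw [← intervalIntegral.integral_of_le h2π]
        simp only [hG]
        rw [intervalIntegral.integral_const_mul, intExp ((k:ℤ)+n)]

lemma intervalIntegral_conj {f : ℝ → ℂ} {a b : ℝ} :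
    ∫ x in a..b, (starRingEnd ℂ) (f x) = (starRingEnd ℂ) (∫ x in a..b, f x) := by
  simp only [intervalIntegral, integral_conj, ← map_sub]

lemma coeffBound (c : ℕ → ℂ) (F : ℂ → ℂ)
    (hF : ∀ z ∈ Metric.ball (0:ℂ) 1, HasSum (fun j : ℕ => c j * z ^ j) (F z))
    (hcont : ContinuousOn F (Metric.ball (0:ℂ) 1))
    (hre : ∀ z ∈ Metric.ball (0:ℂ) 1, (F z).re ≤ 1)
    (j : ℕ) (hj : 1 ≤ j) : ‖c j‖ ≤ 2 * (1 - (c 0).re) := by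
  -- step 1: bound at each radius
  have key : ∀ ρ : ℝ, 0 < ρ → ρ < 1 → ‖c j‖ * ρ^j ≤ 2 * (1 - (c 0).re) := by
    intro ρ hρ0 hρ1
    have h2π : (0:ℝ) ≤ 2*Real.pi := by positivity
    set circ : ℝ → ℂ := fun θ => (ρ:ℂ) * Complex.exp ((θ:ℂ) * Complex.I) with hcirc
    have hmem : ∀ θ : ℝ, circ θ ∈ Metric.ball (0:ℂ) 1 := by
      intro θ
      simp only [hcirc, Metric.mem_ball, dist_zero_right, norm_mul, Complex.norm_real,
        Real.norm_eq_abs, _root_.abs_of_nonneg hρ0.le, Complex.norm_exp_ofReal_mul_I]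
      simpa using hρ1
    have hFcont : Continuous (fun θ : ℝ => F (circ θ)) := by
      apply hcont.comp_continuous ?_ hmem
      exact continuous_const.mul (Complex.continuous_exp.comp (by fun_prop))
    -- the three integrals
    have hAneg : (∫ θ in (0:ℝ)..(2*Real.pi),
        F (circ θ) * Complex.exp (((-(j:ℤ) : ℤ):ℂ) * θ * Complex.I))
        = (2*Real.pi:ℂ) * (c j * (ρ:ℂ)^j) := by
      rw [gen c F hF ρ hρ0 hρ1 (-(j:ℤ))]
      rw [tsum_eq_single j ?_]
      · simp; ring
      · intro k hk
        have hne : ¬ ((k:ℤ) + -(j:ℤ) = 0) := by omega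
        rw [if_neg hne, mul_zero]
    have hApos : (∫ θ in (0:ℝ)..(2*Real.pi),
        F (circ θ) * Complex.exp ((((j:ℤ) : ℤ):ℂ) * θ * Complex.I)) = 0 := by
      rw [gen c F hF ρ hρ0 hρ1 (j:ℤ)]
      have h0 : ∀ k : ℕ, c k * (ρ:ℂ)^k
          * (if ((k:ℤ) + (j:ℤ) = 0) then (2*Real.pi:ℂ) else 0) = 0 := by
        intro k
        have hne : ¬ ((k:ℤ) + (j:ℤ) = 0) := by omega
        rw [if_neg hne, mul_zero]
      rw [tsum_congr h0, tsum_zero]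
    have hA0 : (∫ θ in (0:ℝ)..(2*Real.pi),
        F (circ θ) * Complex.exp (((0 : ℤ):ℂ) * θ * Complex.I)) = (2*Real.pi:ℂ) * c 0 := by
      rw [gen c F hF ρ hρ0 hρ1 0]
      rw [tsum_eq_single 0 ?_]
      · simp; ring
      · intro k hk
        have hne : ¬ ((k:ℤ) + 0 = 0) := by omega
        rw [if_neg hne, mul_zero]
    -- define u and e
    set u : ℝ → ℝ := fun θ => 1 - (F (circ θ)).re with hu
    have hu0 : ∀ θ, 0 ≤ u θ := by
      intro θ
      have := hre _ (hmem θ)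
      simp only [hu]
      linarith
    have hucont : Continuous u := continuous_const.sub (Complex.continuous_re.comp hFcont)
    set e : ℝ → ℂ := fun θ => Complex.exp (((-(j:ℤ) : ℤ):ℂ) * θ * Complex.I) with he
    have hecont : Continuous e :=
      Complex.continuous_exp.comp (by fun_prop)
    have hnorme : ∀ θ, ‖e θ‖ = 1 := by
      intro θ
      simp only [he]
      rw [show (((-(j:ℤ) : ℤ):ℂ) * θ * Complex.I) = (((-(j:ℤ) : ℤ) * θ : ℝ):ℂ) * Complex.I by
        push_cast; ring]
      exact Complex.norm_exp_ofReal_mul_I _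
    have hjcont : Continuous (fun θ : ℝ => Complex.exp ((((j:ℤ) : ℤ):ℂ) * θ * Complex.I)) :=
      Complex.continuous_exp.comp (by fun_prop)
    -- pointwise identity
    have hpt : ∀ θ : ℝ, ((u θ : ℝ) : ℂ) * e θ
        = e θ - (1/2 : ℂ) * (F (circ θ) * e θ)
          - (1/2 : ℂ) * (starRingEnd ℂ) (F (circ θ)
              * Complex.exp ((((j:ℤ) : ℤ):ℂ) * θ * Complex.I)) := by
      intro θ
      have hconj : (starRingEnd ℂ) (Complex.exp ((((j:ℤ) : ℤ):ℂ) * θ * Complex.I)) = e θ := by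
        rw [← Complex.exp_conj]
        simp only [he]
        congr 1
        simp [map_mul, Complex.conj_I, Complex.conj_ofReal]
        try push_cast
        try ring
      rw [map_mul, hconj]
      have hre2 : (((F (circ θ)).re : ℝ) : ℂ)
          = (F (circ θ) + (starRingEnd ℂ) (F (circ θ))) / 2 := by
        rw [Complex.add_conj]
        push_cast
        ring
      simp only [hu]
      push_cast
      rw [hre2]
      ring
    -- interval integrability
    have hii1 : IntervalIntegrable e volume 0 (2*Real.pi) := hecont.intervalIntegrable _ _
    have hii2 : IntervalIntegrable (fun θ => (1/2 : ℂ) * (F (circ θ) * e θ)) volume 0 (2*Real.pi) :=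
      (continuous_const.mul (hFcont.mul hecont)).intervalIntegrable _ _
    have hii3 : IntervalIntegrable (fun θ => (1/2 : ℂ) * (starRingEnd ℂ) (F (circ θ)
        * Complex.exp ((((j:ℤ) : ℤ):ℂ) * θ * Complex.I))) volume 0 (2*Real.pi) :=
      (continuous_const.mul (Complex.continuous_conj.comp (hFcont.mul hjcont))).intervalIntegrable _ _
    -- value of T
    have hTeq : (∫ θ in (0:ℝ)..(2*Real.pi), ((u θ : ℝ) : ℂ) * e θ)
        = -((Real.pi : ℂ) * (c j * (ρ:ℂ)^j)) := by
      rw [intervalIntegral.integral_congr (g := fun θ =>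
        e θ - (1/2 : ℂ) * (F (circ θ) * e θ)
          - (1/2 : ℂ) * (starRingEnd ℂ) (F (circ θ)
              * Complex.exp ((((j:ℤ) : ℤ):ℂ) * θ * Complex.I)))
        (fun θ _ => hpt θ)]
      rw [intervalIntegral.integral_sub (hii1.sub hii2) hii3,
          intervalIntegral.integral_sub hii1 hii2]
      rw [intervalIntegral.integral_const_mul, intervalIntegral.integral_const_mul]
      rw [intervalIntegral_conj, hApos, hAneg]
      simp only [he]
      rw [intExp (-(j:ℤ))]
      have : ¬ (-(j:ℤ) = 0) := by omega
      rw [if_neg this]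
      simp only [map_zero]
      push_cast
      ring
    -- value of ∫ u
    have hUeq : (∫ θ in (0:ℝ)..(2*Real.pi), u θ) = 2*Real.pi * (1 - (c 0).re) := by
      have hF0 : (∫ θ in (0:ℝ)..(2*Real.pi), F (circ θ)) = (2*Real.pi:ℂ) * c 0 := by
        rw [← hA0]
        apply intervalIntegral.integral_congr
        intro θ _
        simp
      have hFint : IntervalIntegrable (fun θ => F (circ θ)) volume 0 (2*Real.pi) :=
        hFcont.intervalIntegrable _ _
      have hreint : (∫ θ in (0:ℝ)..(2*Real.pi), (F (circ θ)).re) = 2*Real.pi * (c 0).re := by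
        have := Complex.reCLM.intervalIntegral_comp_comm hFint
        have h2 : (∫ θ in (0:ℝ)..(2*Real.pi), Complex.reCLM (F (circ θ)))
            = Complex.reCLM (∫ θ in (0:ℝ)..(2*Real.pi), F (circ θ)) := this
        simp only [Complex.reCLM_apply] at h2
        rw [h2, hF0]
        simp
      simp only [hu]
      have hri : IntervalIntegrable (fun θ => (F (circ θ)).re) volume 0 (2*Real.pi) :=
        (Complex.continuous_re.comp hFcont).intervalIntegrable _ _
      rw [intervalIntegral.integral_sub (intervalIntegrable_const) hri, hreint]
      simp
      ring
    -- norm bound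
    have hnb : ‖(∫ θ in (0:ℝ)..(2*Real.pi), ((u θ : ℝ) : ℂ) * e θ)‖
        ≤ ∫ θ in (0:ℝ)..(2*Real.pi), u θ := by
      refine le_trans (intervalIntegral.norm_integral_le_integral_norm h2π) ?_
      apply le_of_eq
      apply intervalIntegral.integral_congr
      intro θ _
      show ‖((u θ : ℝ):ℂ) * e θ‖ = u θ
      rw [norm_mul, hnorme, Complex.norm_real, Real.norm_eq_abs,
        _root_.abs_of_nonneg (hu0 θ), mul_one]
    rw [hTeq, hUeq] at hnb
    have hT : ‖-((Real.pi : ℂ) * (c j * (ρ:ℂ)^j))‖ = Real.pi * (‖c j‖ * ρ^j) := by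
      rw [norm_neg, norm_mul, norm_mul, norm_pow, Complex.norm_real, Complex.norm_real,
        Real.norm_eq_abs, Real.norm_eq_abs, _root_.abs_of_nonneg Real.pi_pos.le,
        _root_.abs_of_nonneg hρ0.le]
    rw [hT] at hnb
    nlinarith [Real.pi_pos]
  -- step 2: limit ρ → 1
  have hne : Filter.NeBot (nhdsWithin (1:ℝ) (Set.Ioo 0 1)) := by
    rw [← mem_closure_iff_nhdsWithin_neBot, closure_Ioo (by norm_num : (0:ℝ) ≠ 1)]
    constructor <;> norm_num
  have htend : Filter.Tendsto (fun ρ : ℝ => ‖c j‖ * ρ^j) (nhdsWithin (1:ℝ) (Set.Ioo 0 1))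
      (nhds (‖c j‖)) := by
    have : Filter.Tendsto (fun ρ : ℝ => ‖c j‖ * ρ^j) (nhds 1) (nhds (‖c j‖ * 1^j)) :=
      ((continuous_const.mul (continuous_pow j)).tendsto 1)
    simpa using this.mono_left nhdsWithin_le_nhds
  refine le_of_tendsto htend ?_
  exact Filter.eventually_of_mem self_mem_nhdsWithin (fun ρ hρ => key ρ hρ.1 hρ.2)

theorem stmt15 :
    -- Bohr inequality for harmonic f = h + conj g on 𝔻 with Re f ≤ 1, f(0) real ≥ 0
    (∀ f h g : ℂ → ℂ, ∀ a b : ℕ → ℂ,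
      b 0 = 0 →
      DifferentiableOn ℂ h (Metric.ball 0 1) →
      DifferentiableOn ℂ g (Metric.ball 0 1) →
      g 0 = 0 →
      (∀ z ∈ Metric.ball (0 : ℂ) 1, f z = h z + (starRingEnd ℂ) (g z)) →
      (∀ z ∈ Metric.ball (0 : ℂ) 1, HasSum (fun j : ℕ => a j * z ^ j) (h z)) →
      (∀ z ∈ Metric.ball (0 : ℂ) 1, HasSum (fun j : ℕ => b j * z ^ j) (g z)) →
      (∀ z ∈ Metric.ball (0 : ℂ) 1, (f z).re ≤ 1) →
      (f 0).im = 0 → 0 ≤ (f 0).re →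
      ∀ z : ℂ, ‖z‖ ≤ 1 / 3 →
        ∀ s : Finset ℕ, ∑ j ∈ s, ‖(a j + b j) * z ^ j‖ ≤ 1) ∧
    -- sharpness of the constant 1/3
    (∀ r : ℝ, 1 / 3 < r →
      ∃ f h g : ℂ → ℂ, ∃ a b : ℕ → ℂ,
        b 0 = 0 ∧
        DifferentiableOn ℂ h (Metric.ball 0 1) ∧
        DifferentiableOn ℂ g (Metric.ball 0 1) ∧
        g 0 = 0 ∧
        (∀ z ∈ Metric.ball (0 : ℂ) 1, f z = h z + (starRingEnd ℂ) (g z)) ∧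
        (∀ z ∈ Metric.ball (0 : ℂ) 1, HasSum (fun j : ℕ => a j * z ^ j) (h z)) ∧
        (∀ z ∈ Metric.ball (0 : ℂ) 1, HasSum (fun j : ℕ => b j * z ^ j) (g z)) ∧
        (∀ z ∈ Metric.ball (0 : ℂ) 1, (f z).re ≤ 1) ∧
        (f 0).im = 0 ∧ 0 ≤ (f 0).re ∧
        ∃ s : Finset ℕ, 1 < ∑ j ∈ s, ‖a j + b j‖ * r ^ j) := by
  constructor
  · -- Part 1
    intro f h g a b hb0 hdh hdg hg0 hfhg hha hhb href hfim hfre z hz s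
    set c : ℕ → ℂ := fun j => a j + b j with hc
    set F : ℂ → ℂ := fun w => h w + g w with hFdef
    have hF : ∀ w ∈ Metric.ball (0:ℂ) 1, HasSum (fun j : ℕ => c j * w ^ j) (F w) := by
      intro w hw
      have := (hha w hw).add (hhb w hw)
      simpa [hc, hFdef, add_mul] using this
    have hcont : ContinuousOn F (Metric.ball (0:ℂ) 1) :=
      (hdh.continuousOn).add (hdg.continuousOn)
    have hreF : ∀ w ∈ Metric.ball (0:ℂ) 1, (F w).re ≤ 1 := by
      intro w hw
      have h1 := href w hw
      rw [hfhg w hw] at h1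
      simpa [hFdef, Complex.add_re, Complex.conj_re] using h1
    have h0ball : (0:ℂ) ∈ Metric.ball (0:ℂ) 1 := by simp
    have hF0 : F 0 = c 0 := by
      have h1 := hF 0 h0ball
      have h2 : HasSum (fun j : ℕ => c j * (0:ℂ) ^ j) (c 0) := by
        have := hasSum_single (f := fun j : ℕ => c j * (0:ℂ) ^ j) 0
          (fun j hj => by simp [zero_pow hj])
        simpa using this
      exact h1.unique h2
    have hc0f : c 0 = f 0 := by
      rw [← hF0]
      have h1 : f 0 = h 0 + (starRingEnd ℂ) (g 0) := hfhg 0 h0ball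
      rw [h1, hFdef]
      simp [hg0]
    have hc0re : 0 ≤ (c 0).re := by rw [hc0f]; exact hfre
    have hc0im : (c 0).im = 0 := by rw [hc0f]; exact hfim
    have hc0le : (c 0).re ≤ 1 := by
      have := hreF 0 h0ball
      rw [hF0] at this
      exact this
    have hnormc0 : ‖c 0‖ = (c 0).re := by
      have : c 0 = (((c 0).re : ℝ) : ℂ) := Complex.ext rfl (by simp [hc0im])
      rw [this, Complex.norm_real, Real.norm_eq_abs, _root_.abs_of_nonneg]
      · simp
      · simpa using hc0re
    set K : ℝ := 1 - (c 0).re with hK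
    have hK0 : 0 ≤ K := by simp [hK]; linarith
    have hcj : ∀ j : ℕ, 1 ≤ j → ‖c j‖ ≤ 2 * K := fun j hj =>
      coeffBound c F hF hcont hreF j hj
    -- pointwise bound via majorant
    set G : ℕ → ℝ := fun j => if j = 0 then (c 0).re else 2*K*(1/3)^j with hG
    have hG0 : ∀ j, 0 ≤ G j := by
      intro j
      simp only [hG]
      split
      · exact hc0re
      · positivity
    have hGsum : Summable G := by
      have hle : ∀ j, G j ≤ (max ((c 0).re) (2*K)) * (1/3)^j := by
        intro j
        simp only [hG]
        rcases eq_or_ne j 0 with hj | hj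
        · subst hj
          simpa using le_max_left ((c 0).re) (2*K)
        · rw [if_neg hj]
          have h1 : 2*K ≤ max ((c 0).re) (2*K) := le_max_right _ _
          have h2 : (0:ℝ) ≤ (1/3:ℝ)^j := by positivity
          nlinarith
      exact Summable.of_nonneg_of_le hG0 hle
        ((summable_geometric_of_lt_one (by norm_num) (by norm_num : (1/3:ℝ) < 1)).mul_left _)
    have hGtsum : ∑' j, G j ≤ 1 := by
      rw [Summable.tsum_eq_zero_add hGsum]
      have h1 : ∀ n : ℕ, G (n+1) = (2*K*(1/3)) * (1/3)^n := by
        intro n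
        simp only [hG, if_neg (Nat.succ_ne_zero n)]
        rw [pow_succ]
        ring
      rw [tsum_congr h1, tsum_mul_left, tsum_geometric_of_lt_one (by norm_num) (by norm_num)]
      have e1 : G 0 = (c 0).re := by simp [hG]
      have e2 : (1 - (1/3:ℝ))⁻¹ = 3/2 := by norm_num
      rw [e1, e2, hK]
      ring_nf
      nlinarith [hc0re, hc0le]
    have hterm : ∀ j ∈ s, ‖c j * z ^ j‖ ≤ G j := by
      intro j _
      rcases Nat.eq_zero_or_pos j with hj | hj
      · subst hj
        simp [hG, hnormc0]
      · simp only [hG, if_neg hj.ne']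
        rw [norm_mul, norm_pow]
        have hzj : ‖z‖^j ≤ (1/3:ℝ)^j := pow_le_pow_left₀ (norm_nonneg z) hz j
        calc ‖c j‖ * ‖z‖^j ≤ (2*K) * (1/3)^j := by
              apply mul_le_mul (hcj j hj) hzj (by positivity) (by positivity)
          _ = 2*K*(1/3)^j := by ring
    calc ∑ j ∈ s, ‖(a j + b j) * z ^ j‖ = ∑ j ∈ s, ‖c j * z ^ j‖ := by rfl
      _ ≤ ∑ j ∈ s, G j := Finset.sum_le_sum hterm
      _ ≤ ∑' j, G j := Summable.sum_le_tsum s (fun j _ => hG0 j) hGsum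
      _ ≤ 1 := hGtsum
  · -- Part 2: sharpness
    intro r hr
    refine ⟨fun z => -2*z/(1-z), fun z => -2*z/(1-z), fun _ => 0,
      fun j => if j = 0 then 0 else -2, fun _ => 0, rfl, ?_, ?_, rfl, ?_, ?_, ?_, ?_, ?_, ?_, ?_⟩
    · -- differentiability of h
      apply DifferentiableOn.div
      · fun_prop
      · fun_prop
      · intro z hz
        simp only [Metric.mem_ball, dist_zero_right] at hz
        intro hcontra
        have : z = 1 := by linear_combination -hcontra
        rw [this] at hz
        simp at hz
    · exact differentiableOn_const 0
    · intro z _; simp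
    · -- HasSum for h
      intro z hz
      simp only [Metric.mem_ball, dist_zero_right] at hz
      have base : HasSum (fun n : ℕ => z^n) (1-z)⁻¹ := hasSum_geometric_of_norm_lt_one hz
      have h2 : HasSum (fun n : ℕ => (-2*z) * z^n) ((-2*z) * (1-z)⁻¹) := base.mul_left _
      have h3 : (fun n : ℕ => (if n+1 = 0 then (0:ℂ) else -2) * z^(n+1))
          = fun n : ℕ => (-2*z) * z^n := by
        funext n
        rw [if_neg (Nat.succ_ne_zero n), pow_succ]
        ring
      have h4 : HasSum (fun n : ℕ => (if n+1 = 0 then (0:ℂ) else -2) * z^(n+1))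
          ((-2*z) * (1-z)⁻¹) := by rw [h3]; exact h2
      have h5 := (hasSum_nat_add_iff
        (f := fun j : ℕ => (if j = 0 then (0:ℂ) else -2) * z^j) 1).mp h4
      simpa [div_eq_mul_inv] using h5
    · intro z _; simpa using hasSum_zero
    · -- Re f ≤ 1
      intro z hz
      simp only [Metric.mem_ball, dist_zero_right] at hz
      have hD : 0 < Complex.normSq (1 - z) := by
        rw [Complex.normSq_pos]
        intro hcontra
        have : z = 1 := by linear_combination -hcontra
        rw [this] at hz
        simp at hz
      have hz2 : z.re^2 + z.im^2 < 1 := by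
        have h1 : ‖z‖^2 < 1 := by nlinarith [norm_nonneg z]
        have h2 : ‖z‖^2 = z.re^2 + z.im^2 := by
          rw [Complex.sq_norm, Complex.normSq_apply]
          ring
        linarith [h2 ▸ h1]
      rw [Complex.div_re]
      rw [← add_div, div_le_one hD]
      simp only [Complex.normSq_apply, Complex.sub_re, Complex.sub_im, Complex.mul_re,
        Complex.mul_im, Complex.one_re, Complex.one_im, Complex.neg_re, Complex.neg_im,
        Complex.re_ofNat, Complex.im_ofNat]
      nlinarith [hz2]
    · simp
    · simp
    · -- sharpness sum
      by_cases hr1 : r < 1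
      · have hr0 : 0 < r := lt_trans (by norm_num) hr
        set w : ℕ → ℝ := fun j => ‖(if j = 0 then (0:ℂ) else -2) + (0:ℂ)‖ * r^j with hwdef
        have hw : (fun n : ℕ => w (n+1)) = fun n : ℕ => (2*r) * r^n := by
          funext n
          simp only [hwdef, if_neg (Nat.succ_ne_zero n), add_zero, pow_succ]
          rw [show ‖(-2:ℂ)‖ = 2 by simp]
          ring
        have hgeo : HasSum (fun n : ℕ => (2*r)*r^n) ((2*r)*(1-r)⁻¹) :=
          (hasSum_geometric_of_lt_one hr0.le hr1).mul_left _
        have h4 : HasSum (fun n : ℕ => w (n+1)) ((2*r)*(1-r)⁻¹) := by rw [hw]; exact hgeo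
        have h5 := (hasSum_nat_add_iff (f := w) 1).mp h4
        have hw0 : w 0 = 0 := by simp [hwdef]
        have h6 : HasSum w ((2*r)*(1-r)⁻¹) := by simpa [hw0] using h5
        have hS : 1 < (2*r)*(1-r)⁻¹ := by
          rw [← div_eq_mul_inv, lt_div_iff₀ (by linarith : 0 < 1 - r)]
          linarith
        obtain ⟨n, hn⟩ := ((h6.tendsto_sum_nat).eventually (eventually_gt_nhds hS)).exists
        exact ⟨Finset.range n, hn⟩
      · refine ⟨{1}, ?_⟩
        push_neg at hr1
        rw [Finset.sum_singleton]
        simp only [if_neg (one_ne_zero), add_zero, pow_one]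
        rw [show ‖(-2:ℂ)‖ = 2 by simp]
        linarith

end BohrAux
end

section
/- Let p ∈ [1,∞] and let f(z) = Σ_α a_α z^α + Σ_{|α|≥1} conj(b_α) conj(z)^α be a pluriharmonic function from 𝔹_{ℓ_pⁿ} into the unit disk 𝔻. Then for every integer k ≥ 1 and every z ∈ 𝔹_{ℓ_pⁿ}, Σ_{|α|=k} (|a_α|² + |b_α|²) |z^α|² ≤ 16/π². -/
open scoped BigOperators ENNReal

open MeasureTheory Real intervalIntegral in
private lemma orth1 (m : ℤ) :
    (∫ t in (0:ℝ)..(2*π), Complex.exp (m * t * Complex.I)) = if m = 0 then (2*π:ℂ) else 0 := by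
  rcases eq_or_ne m 0 with hm | hm
  · rw [if_pos hm]
    simp only [hm, Int.cast_zero, zero_mul, Complex.exp_zero]
    simp [Complex.ofReal_mul]
  · rw [if_neg hm]
    have hc : (m : ℂ) * Complex.I ≠ 0 := by
      simp [Complex.I_ne_zero, Complex.ext_iff, hm]
    have heq : ∀ t : ℝ, (m:ℂ) * t * Complex.I = ((m:ℂ) * Complex.I) * t := fun t => by ring
    simp only [heq]
    rw [integral_exp_mul_complex hc]
    have h1 : Complex.exp ((m:ℂ) * Complex.I * ((2*π:ℝ):ℂ)) = 1 := by
      have := Complex.exp_int_mul_two_pi_mul_I m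
      rw [← this]
      congr 1
      push_cast
      ring
    rw [h1]
    simp

open MeasureTheory Real intervalIntegral in
private lemma integral_abs_cos_pi : (∫ t in (0:ℝ)..π, |Real.cos t|) = 2 := by
  have hI : ∀ a b : ℝ, IntervalIntegrable (fun x => |Real.cos x|) volume a b :=
    fun a b => (Real.continuous_cos.abs).intervalIntegrable a b
  have h1 : (∫ t in (0:ℝ)..(π/2), |Real.cos t|) = 1 := by
    rw [intervalIntegral.integral_congr (g := Real.cos) ?_]
    · rw [integral_cos]; simp
    · intro x hx
      rw [Set.uIcc_of_le (by positivity)] at hx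
      exact abs_of_nonneg (Real.cos_nonneg_of_mem_Icc
        ⟨by linarith [hx.1, Real.pi_pos], hx.2⟩)
  have h2 : (∫ t in (π/2)..π, |Real.cos t|) = 1 := by
    rw [intervalIntegral.integral_congr (g := fun x => -Real.cos x) ?_]
    · rw [intervalIntegral.integral_neg, integral_cos]; simp
    · intro x hx
      rw [Set.uIcc_of_le (by linarith [Real.pi_pos])] at hx
      exact abs_of_nonpos (Real.cos_nonpos_of_pi_div_two_le_of_le hx.1
        (by linarith [hx.2, Real.pi_pos]))
  rw [← intervalIntegral.integral_add_adjacent_intervals (hI 0 (π/2)) (hI (π/2) π), h1, h2]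
  norm_num

open MeasureTheory Real intervalIntegral in
private lemma integral_abs_cos_twopi (k : ℕ) (hk : 1 ≤ k) (ψ : ℝ) :
    (∫ t in (0:ℝ)..(2*π), |Real.cos ((k:ℝ)*t + ψ)|) = 4 := by
  have hper : Function.Periodic (fun x => |Real.cos x|) π := fun x => by
    simp [Real.cos_add_pi]
  have hint : ∀ t₁ t₂, IntervalIntegrable (fun x => |Real.cos x|) volume t₁ t₂ :=
    fun t₁ t₂ => (Real.continuous_cos.abs).intervalIntegrable t₁ t₂
  have hk' : (k:ℝ) ≠ 0 := Nat.cast_ne_zero.mpr (by omega)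
  rw [intervalIntegral.integral_comp_mul_add (fun x => |Real.cos x|) hk' ψ]
  have h2 : (k:ℝ)*(2*π)+ψ = ((k:ℝ)*0+ψ) + ((2*(k:ℤ)) • π) := by
    rw [zsmul_eq_mul]; push_cast; ring
  rw [h2, hper.intervalIntegral_add_zsmul_eq (2*(k:ℤ)) ((k:ℝ)*0+ψ) hint,
      hper.intervalIntegral_add_eq ((k:ℝ)*0+ψ) 0, zero_add, integral_abs_cos_pi]
  have h3 : ((2*(k:ℤ)) : ℤ) • (2:ℝ) = (4*(k:ℝ)) := by
    rw [zsmul_eq_mul]; push_cast; ring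
  rw [h3, smul_eq_mul]
  field_simp

private lemma exists_unit (c : ℂ) : ∃ u : ℂ, ‖u‖ = 1 ∧ u * c = (‖c‖ : ℂ) := by
  rcases eq_or_ne c 0 with rfl | hc
  · exact ⟨1, by simp, by simp⟩
  · refine ⟨(‖c‖ : ℂ)/c, ?_, ?_⟩
    · rw [norm_div, Complex.norm_real, norm_norm, div_self (norm_ne_zero_iff.mpr hc)]
    · field_simp

open MeasureTheory Real intervalIntegral in
private lemma coeff_bound (F : ℝ → ℂ) (hFm : Continuous F) (hF1 : ∀ t, ‖F t‖ ≤ 1)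
    (k : ℕ) (hk : 1 ≤ k) (c d : ℂ)
    (hc : (∫ t in (0:ℝ)..(2*π), F t * Complex.exp ((-(k:ℤ):ℂ) * t * Complex.I)) = 2*π*c)
    (hd : (∫ t in (0:ℝ)..(2*π), F t * Complex.exp (((k:ℤ):ℂ) * t * Complex.I)) = 2*π*d) :
    ‖c‖ + ‖d‖ ≤ 4/π := by
  obtain ⟨u, hu1, huc⟩ := exists_unit c
  obtain ⟨v, hv1, hvd⟩ := exists_unit d
  have hu0 : u ≠ 0 := by intro hh; rw [hh] at hu1; simp at hu1
  have hvu : ‖v * u⁻¹‖ = 1 := by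
    rw [norm_mul, norm_inv, hu1, hv1]
    norm_num
  obtain ⟨φ, hφ⟩ := (Complex.norm_eq_one_iff (v * u⁻¹)).mp hvu
  set G : ℝ → ℂ := fun t => u * Complex.exp ((-(k:ℤ):ℂ) * t * Complex.I)
      + v * Complex.exp (((k:ℤ):ℂ) * t * Complex.I) with hG
  have hGnorm : ∀ t : ℝ, ‖G t‖ = 2 * |Real.cos ((k:ℝ)*t + φ/2)| := by
    intro t
    have e1 : Complex.exp (((φ/2:ℝ):ℂ) * Complex.I)
          * Complex.exp ((((k:ℝ)*t + φ/2 :ℝ):ℂ) * Complex.I)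
        = Complex.exp (((φ:ℝ):ℂ) * Complex.I) * Complex.exp ((((k:ℤ)):ℂ) * t * Complex.I) := by
      rw [← Complex.exp_add, ← Complex.exp_add]; congr 1; push_cast; ring
    have e2 : Complex.exp (((φ/2:ℝ):ℂ) * Complex.I)
          * Complex.exp (-(((k:ℝ)*t + φ/2 :ℝ):ℂ) * Complex.I)
        = Complex.exp ((-(k:ℤ):ℂ) * t * Complex.I) := by
      rw [← Complex.exp_add]; congr 1; push_cast; ring
    have key : G t = u * (Complex.exp (((φ/2:ℝ):ℂ) * Complex.I)
        * (2 * Complex.cos ((((k:ℝ)*t + φ/2 :ℝ):ℂ)))) := by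
      rw [Complex.two_cos]
      have e3 : u * (Complex.exp (((φ/2:ℝ):ℂ) * Complex.I)
          * (Complex.exp ((((k:ℝ)*t + φ/2 :ℝ):ℂ) * Complex.I)
            + Complex.exp (-(((k:ℝ)*t + φ/2 :ℝ):ℂ) * Complex.I)))
          = u * ((Complex.exp (((φ:ℝ):ℂ) * Complex.I) * Complex.exp ((((k:ℤ)):ℂ) * t * Complex.I))
            + Complex.exp ((-(k:ℤ):ℂ) * t * Complex.I)) := by
        rw [← e1, ← e2]; ring
      rw [e3, hφ, hG]
      field_simp
      ring
    rw [key, norm_mul, norm_mul, hu1, one_mul,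
        Complex.norm_exp_ofReal_mul_I, one_mul, ← Complex.ofReal_cos]
    have : ((2:ℂ) * ((Real.cos ((k:ℝ)*t + φ/2) : ℝ) : ℂ))
        = (((2 * Real.cos ((k:ℝ)*t + φ/2) : ℝ)) : ℂ) := by push_cast; ring
    rw [this, Complex.norm_real, Real.norm_eq_abs, abs_mul]
    norm_num
  have hexp1 : Continuous fun t : ℝ => Complex.exp ((-(k:ℤ):ℂ) * t * Complex.I) := by
    apply Complex.continuous_exp.comp
    exact (continuous_const.mul Complex.continuous_ofReal).mul continuous_const
  have hexp2 : Continuous fun t : ℝ => Complex.exp ((((k:ℤ)):ℂ) * t * Complex.I) := by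
    apply Complex.continuous_exp.comp
    exact (continuous_const.mul Complex.continuous_ofReal).mul continuous_const
  have hGc : Continuous G := by
    rw [hG]; exact (continuous_const.mul hexp1).add (continuous_const.mul hexp2)
  have htp : (0:ℝ) ≤ 2*π := by positivity
  have hsplit : (∫ t in (0:ℝ)..(2*π), F t * G t) = u * (2*π*c) + v * (2*π*d) := by
    rw [← hc, ← hd, ← intervalIntegral.integral_const_mul, ← intervalIntegral.integral_const_mul,
      ← intervalIntegral.integral_add
        (f := fun t => u * (F t * Complex.exp ((-(k:ℤ):ℂ) * t * Complex.I)))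
        (g := fun t => v * (F t * Complex.exp (((k:ℤ):ℂ) * t * Complex.I)))
        ((continuous_const.mul (hFm.mul hexp1)).intervalIntegrable _ _)
        ((continuous_const.mul (hFm.mul hexp2)).intervalIntegrable _ _)]
    congr 1; funext t; rw [hG]; ring
  have hval : u * (2*π*c) + v * (2*π*d) = (((2*π*(‖c‖+‖d‖) : ℝ)) : ℂ) := by
    have : u * ((2:ℂ)*(π:ℝ)*c) + v * ((2:ℂ)*(π:ℝ)*d)
        = (2:ℂ)*(π:ℝ)*(u*c) + (2:ℂ)*(π:ℝ)*(v*d) := by ring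
    rw [this, huc, hvd]; push_cast; ring
  have hbound : (2*π*(‖c‖+‖d‖) : ℝ) ≤ 8 := by
    have h1 : ‖∫ t in (0:ℝ)..(2*π), F t * G t‖ = (2*π*(‖c‖+‖d‖) : ℝ) := by
      rw [hsplit, hval, Complex.norm_real, Real.norm_eq_abs, abs_of_nonneg (by positivity)]
    have h2a : ‖∫ t in (0:ℝ)..(2*π), F t * G t‖
        ≤ ∫ t in (0:ℝ)..(2*π), ‖F t * G t‖ :=
      intervalIntegral.norm_integral_le_integral_norm htp
    have h2b : (∫ t in (0:ℝ)..(2*π), ‖F t * G t‖)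
        ≤ ∫ t in (0:ℝ)..(2*π), 2 * |Real.cos ((k:ℝ)*t + φ/2)| := by
      refine intervalIntegral.integral_mono_on htp
        ((Continuous.norm (hFm.mul hGc)).intervalIntegrable _ _)
        ((continuous_const.mul ((Real.continuous_cos.comp
          ((continuous_const.mul continuous_id).add continuous_const)).abs)).intervalIntegrable _ _)
        (fun x _ => ?_)
      rw [norm_mul, ← hGnorm x]
      calc ‖F x‖ * ‖G x‖ ≤ 1 * ‖G x‖ :=
            mul_le_mul_of_nonneg_right (hF1 x) (norm_nonneg (G x))
        _ = ‖G x‖ := one_mul _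
    have h2 : ‖∫ t in (0:ℝ)..(2*π), F t * G t‖
        ≤ ∫ t in (0:ℝ)..(2*π), 2 * |Real.cos ((k:ℝ)*t + φ/2)| := le_trans h2a h2b
    have h3 : (∫ t in (0:ℝ)..(2*π), 2 * |Real.cos ((k:ℝ)*t + φ/2)|) = 8 := by
      rw [intervalIntegral.integral_const_mul, integral_abs_cos_twopi k hk]
      norm_num
    rw [← h1]; rw [h3] at h2; exact h2
  have hπ := Real.pi_pos
  rw [le_div_iff₀ hπ]
  nlinarith [norm_nonneg c, norm_nonneg d]

private lemma pnormE_mono {n : ℕ} (p : ℝ≥0∞) {w z : Fin n → ℂ}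
    (hwz : ∀ j, ‖w j‖ ≤ ‖z j‖) : pnormE p w ≤ pnormE p z := by
  unfold pnormE
  split_ifs with hpi
  · exact ciSup_mono (Finite.bddAbove_range _) hwz
  · exact Real.rpow_le_rpow (by positivity)
      (Finset.sum_le_sum fun j _ =>
        Real.rpow_le_rpow (norm_nonneg _) (hwz j) ENNReal.toReal_nonneg)
      (by positivity)

open MeasureTheory Real intervalIntegral in
private lemma norm_exp_int_mul : ∀ (q : ℤ) (t : ℝ), ‖Complex.exp ((q:ℂ) * t * Complex.I)‖ = 1 := by
  intro q t
  have hq : ((q:ℂ) * t * Complex.I) = ((((q:ℝ)*t : ℝ)):ℂ) * Complex.I := by push_cast; ring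
  rw [hq, Complex.norm_exp_ofReal_mul_I]

private lemma cont_exp_int_mul (c : ℂ) :
    Continuous fun t : ℝ => Complex.exp (c * t * Complex.I) :=
  Complex.continuous_exp.comp ((continuous_const.mul Complex.continuous_ofReal).mul continuous_const)

private lemma conj_exp_int (q : ℤ) (t : ℝ) :
    (starRingEnd ℂ) (Complex.exp ((q:ℂ) * t * Complex.I))
      = Complex.exp (((-q:ℤ):ℂ) * t * Complex.I) := by
  have h : (starRingEnd ℂ) ((q:ℂ) * t * Complex.I) = ((-q:ℤ):ℂ) * t * Complex.I := by
    simp only [map_mul, Complex.conj_ofReal, Complex.conj_I, map_intCast]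
    push_cast
    ring
  rw [← h, Complex.exp_conj]

private lemma conj_exp_real (q : ℂ) (hq : (starRingEnd ℂ) q = q) (t : ℝ) :
    (starRingEnd ℂ) (Complex.exp (q * t * Complex.I)) = Complex.exp (-q * t * Complex.I) := by
  have h : (starRingEnd ℂ) (q * t * Complex.I) = -q * t * Complex.I := by
    rw [map_mul, map_mul, Complex.conj_ofReal, Complex.conj_I, hq]
    ring
  rw [← h, Complex.exp_conj]

open MeasureTheory Real intervalIntegral in
private lemma intervalIntegral_conj2 (f : ℝ → ℂ) :
    (∫ t in (0:ℝ)..(2*π), (starRingEnd ℂ) (f t))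
      = (starRingEnd ℂ) (∫ t in (0:ℝ)..(2*π), f t) := by
  have htp : (0:ℝ) ≤ 2*π := by positivity
  rw [intervalIntegral.integral_of_le htp, intervalIntegral.integral_of_le htp,
    _root_.integral_conj]

open MeasureTheory Real intervalIntegral in
private lemma extract {n : ℕ} (w : Fin n → ℂ) (H : ℝ → ℂ) (A : (Fin n → ℕ) → ℂ)
    (hsum : ∀ t : ℝ, HasSum (fun α : Fin n → ℕ =>
      A α * ∏ j, (Complex.exp ((t:ℂ) * Complex.I) * w j) ^ (α j)) (H t))
    (habs : Summable (fun α : Fin n → ℕ => ‖A α * ∏ j, (w j) ^ (α j)‖))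
    (m : ℤ) :
    (∫ t in (0:ℝ)..(2*π), H t * Complex.exp ((m:ℂ) * t * Complex.I))
      = 2*π * ∑' α : Fin n → ℕ,
          (if ((∑ i, α i : ℤ)) = -m then A α * ∏ j, (w j) ^ (α j) else 0) := by
  set u : (Fin n → ℕ) → ℂ := fun α => A α * ∏ j, (w j) ^ (α j) with hu
  set g : (Fin n → ℕ) → ℝ → ℂ := fun α t =>
      u α * Complex.exp ((((∑ i, α i : ℤ) + m : ℤ) : ℂ) * t * Complex.I) with hg
  have htp : (0:ℝ) ≤ 2*π := by positivity
  have hpt : ∀ t : ℝ, H t * Complex.exp ((m:ℂ) * t * Complex.I) = ∑' α, g α t := by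
    intro t
    have h2 : HasSum (fun α => g α t) (H t * Complex.exp ((m:ℂ)*t*Complex.I)) := by
      have hs := (hsum t).mul_right (Complex.exp ((m:ℂ)*t*Complex.I))
      refine (congrArg (fun F => HasSum F (H t * Complex.exp ((m:ℂ)*t*Complex.I))) ?_).mpr hs
      funext α
      have e4 : Complex.exp ((((∑ i, α i : ℤ) + m :ℤ):ℂ) * t * Complex.I)
          = Complex.exp (((∑ i, α i : ℕ):ℂ) * ((t:ℂ) * Complex.I))
            * Complex.exp ((m:ℂ)*t*Complex.I) := by
        rw [← Complex.exp_add]; congr 1; push_cast; ring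
      have e5 : ∏ j, (Complex.exp ((t:ℂ)*Complex.I) * w j)^(α j)
          = Complex.exp (((∑ i, α i : ℕ):ℂ) * ((t:ℂ) * Complex.I)) * ∏ j, (w j)^(α j) := by
        simp only [mul_pow, Finset.prod_mul_distrib, Finset.prod_pow_eq_pow_sum,
          Complex.exp_nat_mul]
      simp only [hg, hu]
      rw [e4, e5]
      ring
    exact h2.tsum_eq.symm
  have hgcont : ∀ α, Continuous (g α) := by
    intro α
    simp only [hg]
    exact continuous_const.mul (cont_exp_int_mul _)
  have husum : Summable (fun α : Fin n → ℕ => ‖u α‖₊) := by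
    rw [← NNReal.summable_coe]
    simp only [coe_nnnorm]
    exact habs
  have hgnorm : ∀ α t, ‖g α t‖₊ = ‖u α‖₊ := by
    intro α t
    apply NNReal.coe_injective
    rw [coe_nnnorm, coe_nnnorm]
    simp only [hg]
    rw [norm_mul, norm_exp_int_mul, mul_one]
  have hswap : (∫ t in Set.Ioc (0:ℝ) (2*π), ∑' α, g α t)
      = ∑' α, ∫ t in Set.Ioc (0:ℝ) (2*π), g α t := by
    apply MeasureTheory.integral_tsum
    · intro α; exact (hgcont α).aestronglyMeasurable
    · have hval : ∀ α : Fin n → ℕ, (∫⁻ t in Set.Ioc (0:ℝ) (2*π), (‖g α t‖₊ : ℝ≥0∞))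
          = (‖u α‖₊ : ℝ≥0∞) * ENNReal.ofReal (2*π) := by
        intro α
        simp only [hgnorm]
        rw [MeasureTheory.lintegral_const, Measure.restrict_apply_univ, Real.volume_Ioc,
          sub_zero]
      simp only [enorm_eq_nnnorm]
      simp only [hval]
      rw [ENNReal.tsum_mul_right]
      exact ENNReal.mul_ne_top (ENNReal.tsum_coe_ne_top_iff_summable.mpr husum)
        ENNReal.ofReal_ne_top
  have hI : ∀ α : Fin n → ℕ, (∫ t in Set.Ioc (0:ℝ) (2*π), g α t)
      = u α * (if ((∑ i, α i : ℤ) + m : ℤ) = 0 then (2*π:ℂ) else 0) := by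
    intro α
    rw [← intervalIntegral.integral_of_le htp]
    have h6 : (∫ t in (0:ℝ)..(2*π), g α t)
        = u α * ∫ t in (0:ℝ)..(2*π),
            Complex.exp ((((∑ i, α i : ℤ) + m : ℤ):ℂ) * t * Complex.I) := by
      rw [← intervalIntegral.integral_const_mul]
    rw [h6, orth1]
  calc (∫ t in (0:ℝ)..(2*π), H t * Complex.exp ((m:ℂ) * t * Complex.I))
      = ∫ t in (0:ℝ)..(2*π), ∑' α, g α t := by simp only [hpt]
    _ = ∫ t in Set.Ioc (0:ℝ) (2*π), ∑' α, g α t := intervalIntegral.integral_of_le htp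
    _ = ∑' α, ∫ t in Set.Ioc (0:ℝ) (2*π), g α t := hswap
    _ = ∑' α : Fin n → ℕ, u α * (if ((∑ i, α i : ℤ) + m : ℤ) = 0 then (2*π:ℂ) else 0) :=
        tsum_congr hI
    _ = ∑' α : Fin n → ℕ, 2*π * (if ((∑ i, α i : ℤ)) = -m then u α else 0) := by
        refine tsum_congr fun α => ?_
        by_cases hcond : (∑ i, α i : ℤ) = -m
        · rw [if_pos (by omega), if_pos hcond]; ring
        · rw [if_neg (by omega), if_neg hcond]; ring
    _ = 2*π * ∑' α : Fin n → ℕ,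
          (if ((∑ i, α i : ℤ)) = -m then A α * ∏ j, (w j) ^ (α j) else 0) := by
        rw [tsum_mul_left]

noncomputable def chi : ℝ → ℝ := Set.indicator (Set.Ioc (0:ℝ) (2*Real.pi)) (fun _ => (1:ℝ))

open MeasureTheory Real intervalIntegral in
private lemma chi_mul_eq_indicator (G : ℝ → ℂ) (t : ℝ) :
    ((chi t : ℝ) : ℂ) * G t = Set.indicator (Set.Ioc (0:ℝ) (2*π)) G t := by
  by_cases ht : t ∈ Set.Ioc (0:ℝ) (2*π)
  · rw [Set.indicator_of_mem ht, chi, Set.indicator_of_mem ht]; norm_num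
  · rw [Set.indicator_of_notMem ht, chi, Set.indicator_of_notMem ht]; norm_num

open MeasureTheory Real intervalIntegral in
private lemma integral_chi_exp (q : ℤ) :
    (∫ t : ℝ, ((chi t : ℝ) : ℂ) * Complex.exp ((q:ℂ) * t * Complex.I))
      = if q = 0 then (2*π:ℂ) else 0 := by
  have htp : (0:ℝ) ≤ 2*π := by positivity
  have h1 : (fun t : ℝ => ((chi t : ℝ) : ℂ) * Complex.exp ((q:ℂ) * t * Complex.I))
      = Set.indicator (Set.Ioc (0:ℝ) (2*π)) (fun t => Complex.exp ((q:ℂ) * t * Complex.I)) := by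
    funext t
    exact chi_mul_eq_indicator (fun t => Complex.exp ((q:ℂ) * t * Complex.I)) t
  rw [h1, MeasureTheory.integral_indicator measurableSet_Ioc,
    ← intervalIntegral.integral_of_le htp, orth1 q]

open MeasureTheory Real intervalIntegral in
private lemma integrable_chi_exp (q : ℤ) :
    Integrable (fun t : ℝ => ((chi t : ℝ) : ℂ) * Complex.exp ((q:ℂ) * t * Complex.I)) := by
  have h1 : (fun t : ℝ => ((chi t : ℝ) : ℂ) * Complex.exp ((q:ℂ) * t * Complex.I))
      = Set.indicator (Set.Ioc (0:ℝ) (2*π)) (fun t => Complex.exp ((q:ℂ) * t * Complex.I)) := by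
    funext t
    exact chi_mul_eq_indicator (fun t => Complex.exp ((q:ℂ) * t * Complex.I)) t
  rw [h1, MeasureTheory.integrable_indicator_iff measurableSet_Ioc]
  exact (cont_exp_int_mul _).integrableOn_Ioc

open MeasureTheory Real intervalIntegral in
private lemma parseval {n : ℕ} {ι : Type*} [Fintype ι] (mIdx : ι → (Fin n → ℕ))
    (hinj : Function.Injective mIdx) (u : ι → ℂ) :
    (∫ x : Fin n → ℝ, (∏ j, chi (x j)) *
        ‖∑ β : ι, u β * Complex.exp (((∑ j, (mIdx β j : ℝ) * x j : ℝ):ℂ) * Complex.I)‖^2)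
      = (2*π)^n * ∑ β : ι, ‖u β‖^2 := by
  set E : ι → (Fin n → ℝ) → ℂ := fun β x =>
      Complex.exp (((∑ j, (mIdx β j : ℝ) * x j : ℝ):ℂ) * Complex.I) with hE
  set S : (Fin n → ℝ) → ℂ := fun x => ∑ β : ι, u β * E β x with hS
  set q : ι → ι → Fin n → ℤ := fun β γ j => (mIdx β j : ℤ) - (mIdx γ j : ℤ) with hq
  set T : ι → ι → (Fin n → ℝ) → ℂ := fun β γ x => (u β * (starRingEnd ℂ) (u γ))
      * ∏ j, (((chi (x j) : ℝ):ℂ) * Complex.exp ((q β γ j : ℂ) * (x j) * Complex.I)) with hT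
  have hEprod : ∀ β x, E β x = ∏ j, Complex.exp (((mIdx β j : ℝ):ℂ) * (x j) * Complex.I) := by
    intro β x
    simp only [hE]
    rw [show (((∑ j, (mIdx β j : ℝ) * x j : ℝ)):ℂ) * Complex.I
        = ∑ j, ((mIdx β j : ℝ):ℂ) * (x j) * Complex.I by
      rw [Complex.ofReal_sum, Finset.sum_mul]
      exact Finset.sum_congr rfl fun j _ => by push_cast; ring]
    exact Complex.exp_sum _ _
  have hEconj : ∀ β γ x, E β x * (starRingEnd ℂ) (E γ x)
      = ∏ j, Complex.exp ((q β γ j : ℂ) * (x j) * Complex.I) := by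
    intro β γ x
    rw [hEprod, hEprod, map_prod, ← Finset.prod_mul_distrib]
    congr 1; funext j
    rw [← Complex.exp_conj, ← Complex.exp_add]
    congr 1
    simp only [map_mul, Complex.conj_I, Complex.conj_ofReal, hq]
    push_cast; ring
  have hpt : ∀ x : Fin n → ℝ, (((∏ j, chi (x j) : ℝ)):ℂ) * (S x * (starRingEnd ℂ) (S x))
      = ∑ β : ι, ∑ γ : ι, T β γ x := by
    intro x
    have h1 : S x * (starRingEnd ℂ) (S x)
        = ∑ β : ι, ∑ γ : ι, (u β * (starRingEnd ℂ) (u γ)) * (E β x * (starRingEnd ℂ) (E γ x)) := by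
      simp only [hS]
      rw [map_sum (starRingEnd ℂ) (fun β => u β * E β x) Finset.univ, Finset.sum_mul_sum]
      refine Finset.sum_congr rfl fun β _ => Finset.sum_congr rfl fun γ _ => ?_
      rw [map_mul]
      ring
    rw [h1, Finset.mul_sum]
    refine Finset.sum_congr rfl fun β _ => ?_
    rw [Finset.mul_sum]
    refine Finset.sum_congr rfl fun γ _ => ?_
    simp only [hT]
    rw [hEconj, Complex.ofReal_prod, Finset.prod_mul_distrib]
    ring
  have hTint : ∀ β γ : ι, Integrable (T β γ) := by
    intro β γ
    exact (MeasureTheory.Integrable.fintype_prod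
      (f := fun j t => ((chi t : ℝ):ℂ) * Complex.exp ((q β γ j : ℂ) * t * Complex.I))
      (fun j => integrable_chi_exp (q β γ j))).const_mul _
  have hTval : ∀ β γ : ι, (∫ x : Fin n → ℝ, T β γ x)
      = (u β * (starRingEnd ℂ) (u γ)) * ∏ j, (if q β γ j = 0 then (2*π:ℂ) else 0) := by
    intro β γ
    simp only [hT]
    rw [MeasureTheory.integral_const_mul]
    congr 1
    rw [MeasureTheory.integral_fintype_prod_volume_eq_prod
      (f := fun j t => ((chi t : ℝ):ℂ) * Complex.exp ((q β γ j : ℂ) * t * Complex.I))]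
    exact Finset.prod_congr rfl fun j _ => integral_chi_exp (q β γ j)
  have hmain : (∫ x : Fin n → ℝ, (((∏ j, chi (x j) : ℝ)):ℂ) * (S x * (starRingEnd ℂ) (S x)))
      = ((2*π:ℂ))^n * ∑ β : ι, (‖u β‖^2 : ℝ) := by
    calc (∫ x : Fin n → ℝ, (((∏ j, chi (x j) : ℝ)):ℂ) * (S x * (starRingEnd ℂ) (S x)))
        = ∫ x : Fin n → ℝ, ∑ β : ι, ∑ γ : ι, T β γ x := by
          simp only [hpt]
      _ = ∑ β : ι, ∑ γ : ι, ∫ x : Fin n → ℝ, T β γ x := by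
          rw [MeasureTheory.integral_finset_sum _
            (fun β _ => integrable_finset_sum _ (fun γ _ => hTint β γ))]
          exact Finset.sum_congr rfl fun β _ =>
            MeasureTheory.integral_finset_sum _ (fun γ _ => hTint β γ)
      _ = ∑ β : ι, (u β * (starRingEnd ℂ) (u β)) * ((2*π:ℂ))^n := by
          refine Finset.sum_congr rfl fun β _ => ?_
          rw [Finset.sum_eq_single_of_mem β (Finset.mem_univ β) ?side, hTval]
          · congr 1
            · rw [Finset.prod_congr rfl fun j _ => if_pos (by simp [hq]), Finset.prod_const,
                Finset.card_univ, Fintype.card_fin]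
          case side =>
            intro γ _ hne
            rw [hTval]
            have hex : ∃ j, q β γ j ≠ 0 := by
              by_contra hcon
              push_neg at hcon
              apply hne
              apply hinj
              funext j
              have h9 := hcon j
              simp only [hq, sub_eq_zero] at h9
              exact_mod_cast h9.symm
            obtain ⟨j0, hj0⟩ := hex
            rw [show (∏ j, (if q β γ j = 0 then (2*π:ℂ) else 0)) = 0 from
              Finset.prod_eq_zero (Finset.mem_univ j0) (if_neg hj0), mul_zero]
      _ = ((2*π:ℂ))^n * ∑ β : ι, (‖u β‖^2 : ℝ) := by
          rw [Complex.ofReal_sum, Finset.mul_sum]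
          refine Finset.sum_congr rfl fun β _ => ?_
          rw [Complex.mul_conj]
          have h8 : (‖u β‖^2 : ℝ) = Complex.normSq (u β) := by
            rw [← Complex.sq_norm]
          rw [h8]
          ring
  have hreal : (((∫ x : Fin n → ℝ, (∏ j, chi (x j)) * ‖S x‖^2 : ℝ)):ℂ)
      = (((2*π)^n * ∑ β : ι, ‖u β‖^2 : ℝ) : ℂ) := by
    rw [show ((∫ x : Fin n → ℝ, (∏ j, chi (x j)) * ‖S x‖^2 : ℝ) : ℂ)
        = ∫ x : Fin n → ℝ, (((∏ j, chi (x j)) * ‖S x‖^2 : ℝ) : ℂ) from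
      (_root_.integral_ofReal (𝕜 := ℂ)).symm]
    have : ∀ x : Fin n → ℝ, (((∏ j, chi (x j)) * ‖S x‖^2 : ℝ):ℂ)
        = (((∏ j, chi (x j) : ℝ)):ℂ) * (S x * (starRingEnd ℂ) (S x)) := by
      intro x
      rw [Complex.mul_conj]
      have h8 : (‖S x‖^2 : ℝ) = Complex.normSq (S x) := by
        rw [← Complex.sq_norm]
      rw [h8]
      push_cast
      ring
    simp only [this]
    rw [hmain]
    push_cast
    ring
  exact_mod_cast hreal

open MeasureTheory Real intervalIntegral in
theorem stmt19 (n : ℕ) (hn : 1 ≤ n) (p : ℝ≥0∞) (hp : 1 ≤ p)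
    (f h g : (Fin n → ℂ) → ℂ) (a b : (Fin n → ℕ) → ℂ) (hb0 : b 0 = 0)
    (hh : DifferentiableOn ℂ h {z | pnormE p z < 1})
    (hg : DifferentiableOn ℂ g {z | pnormE p z < 1})
    (hg0 : g 0 = 0)
    (hfd : ∀ z : Fin n → ℂ, pnormE p z < 1 → f z = h z + (starRingEnd ℂ) (g z))
    (hha : ∀ z : Fin n → ℂ, pnormE p z < 1 →
      HasSum (fun α : Fin n → ℕ => a α * ∏ k, z k ^ α k) (h z))
    (hgb : ∀ z : Fin n → ℂ, pnormE p z < 1 →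
      HasSum (fun α : Fin n → ℕ => b α * ∏ k, z k ^ α k) (g z))
    (hmap : ∀ z : Fin n → ℂ, pnormE p z < 1 → ‖f z‖ < 1)
    (k : ℕ) (hk : 1 ≤ k) (z : Fin n → ℂ) (hz : pnormE p z < 1) :
    -- the (finite) sum over all multi-indices `β` with `|β| = k`
    ∑' β : {β : Fin n → ℕ // ∑ i, β i = k},
        (‖a β.1‖ ^ 2 + ‖b β.1‖ ^ 2) * ‖∏ i, z i ^ β.1 i‖ ^ 2 ≤
      16 / Real.pi ^ 2 := by
  haveI fintS : Fintype {β : Fin n → ℕ // ∑ i, β i = k} :=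
    Fintype.ofInjective
      (fun β : {β : Fin n → ℕ // ∑ i, β i = k} =>
        (fun i => (⟨β.1 i, Nat.lt_succ_of_le (le_trans
          (Finset.single_le_sum (fun _ _ => Nat.zero_le _) (Finset.mem_univ i))
          (le_of_eq β.2))⟩ : Fin (k+1))))
      (fun β γ hbg => Subtype.ext (funext fun i => congrArg Fin.val (congrFun hbg i)))
  have hπ := Real.pi_pos
  have htp : (0:ℝ) ≤ 2*π := by positivity
  have hnorm1 : ∀ (t : ℝ) (wj : ℂ), ‖Complex.exp ((t:ℂ) * Complex.I) * wj‖ = ‖wj‖ := by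
    intro t wj
    rw [norm_mul, Complex.norm_exp_ofReal_mul_I, one_mul]
  have hstep : ∀ (w : Fin n → ℂ), (∀ j, ‖w j‖ ≤ ‖z j‖) → pnormE p w < 1 :=
    fun w hw => lt_of_le_of_lt (pnormE_mono p hw) hz
  set u : {β : Fin n → ℕ // ∑ i, β i = k} → ℂ := fun β => a β.1 * ∏ j, (z j)^(β.1 j) with hu
  set v : {β : Fin n → ℕ // ∑ i, β i = k} → ℂ := fun β => b β.1 * ∏ j, (z j)^(β.1 j) with hv
  -- ### the pointwise bound, for every rotation θ
  have key : ∀ θ : Fin n → ℝ, ‖∑ β : {β : Fin n → ℕ // ∑ i, β i = k}, u β * Complex.exp (((∑ j, (β.1 j : ℝ) * θ j : ℝ):ℂ) * Complex.I)‖ + ‖∑ β : {β : Fin n → ℕ // ∑ i, β i = k}, v β * Complex.exp (((∑ j, (β.1 j : ℝ) * θ j : ℝ):ℂ) * Complex.I)‖ ≤ 4/π := by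
    intro θ
    set w : Fin n → ℂ := fun j => Complex.exp ((θ j : ℂ) * Complex.I) * z j with hwdef
    have hwz : ∀ j, ‖w j‖ = ‖z j‖ := fun j => hnorm1 _ _
    have hwball : pnormE p w < 1 := hstep w (fun j => le_of_eq (hwz j))
    have hζball : ∀ t : ℝ, pnormE p (fun j => Complex.exp ((t:ℂ) * Complex.I) * w j) < 1 :=
      fun t => hstep _ (fun j => by rw [hnorm1, hwz])
    have habsA : Summable (fun α : Fin n → ℕ => ‖a α * ∏ j, (w j)^(α j)‖) :=
      summable_norm_iff.mpr (hha w hwball).summable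
    have habsB : Summable (fun α : Fin n → ℕ => ‖b α * ∏ j, (w j)^(α j)‖) :=
      summable_norm_iff.mpr (hgb w hwball).summable
    have hHsum : ∀ t : ℝ, HasSum (fun α : Fin n → ℕ =>
        a α * ∏ j, (Complex.exp ((t:ℂ) * Complex.I) * w j) ^ (α j)) (h (fun j => Complex.exp ((t:ℂ) * Complex.I) * w j)) :=
      fun t => hha _ (hζball t)
    have hGsum : ∀ t : ℝ, HasSum (fun α : Fin n → ℕ =>
        b α * ∏ j, (Complex.exp ((t:ℂ) * Complex.I) * w j) ^ (α j)) (g (fun j => Complex.exp ((t:ℂ) * Complex.I) * w j)) :=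
      fun t => hgb _ (hζball t)
    have E1 := extract w (fun t : ℝ => h (fun j => Complex.exp ((t:ℂ) * Complex.I) * w j))
      a hHsum habsA (-(k:ℤ))
    have E2 : (∫ t in (0:ℝ)..(2*π), h (fun j => Complex.exp ((t:ℂ) * Complex.I) * w j) * Complex.exp ((((k:ℤ)):ℂ) * t * Complex.I))
        = 2*π * ∑' α : Fin n → ℕ,
            (if ((∑ i, α i : ℤ)) = -((k:ℤ)) then a α * ∏ j, (w j) ^ (α j) else 0) :=
      extract w _ a hHsum habsA ((k:ℤ))
    have E3 := extract w (fun t : ℝ => g (fun j => Complex.exp ((t:ℂ) * Complex.I) * w j))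
      b hGsum habsB (-(k:ℤ))
    have E4 : (∫ t in (0:ℝ)..(2*π), g (fun j => Complex.exp ((t:ℂ) * Complex.I) * w j) * Complex.exp ((((k:ℤ)):ℂ) * t * Complex.I))
        = 2*π * ∑' α : Fin n → ℕ,
            (if ((∑ i, α i : ℤ)) = -((k:ℤ)) then b α * ∏ j, (w j) ^ (α j) else 0) :=
      extract w _ b hGsum habsB ((k:ℤ))
    simp only [Int.cast_neg, neg_neg] at E1 E3
    have hzeroA : (∑' α : Fin n → ℕ,
        (if ((∑ i, α i : ℤ)) = -((k:ℤ)) then a α * ∏ j, (w j)^(α j) else 0)) = 0 := by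
      rw [show (fun α : Fin n → ℕ =>
          (if ((∑ i, α i : ℤ)) = -((k:ℤ)) then a α * ∏ j, (w j)^(α j) else 0))
          = fun _ => (0:ℂ) from funext fun α => if_neg (by
            intro hcon
            have h0 : (0:ℤ) ≤ ∑ i, ((α i : ℕ) : ℤ) :=
              Finset.sum_nonneg fun i _ => Int.natCast_nonneg _
            omega)]
      exact tsum_zero
    have hzeroB : (∑' α : Fin n → ℕ,
        (if ((∑ i, α i : ℤ)) = -((k:ℤ)) then b α * ∏ j, (w j)^(α j) else 0)) = 0 := by
      rw [show (fun α : Fin n → ℕ =>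
          (if ((∑ i, α i : ℤ)) = -((k:ℤ)) then b α * ∏ j, (w j)^(α j) else 0))
          = fun _ => (0:ℂ) from funext fun α => if_neg (by
            intro hcon
            have h0 : (0:ℤ) ≤ ∑ i, ((α i : ℕ) : ℤ) :=
              Finset.sum_nonneg fun i _ => Int.natCast_nonneg _
            omega)]
      exact tsum_zero
    rw [hzeroA, mul_zero] at E2
    rw [hzeroB, mul_zero] at E4
    -- identify the tsums with finite sums
    have hCw : (∑' α : Fin n → ℕ, (if ((∑ i, α i : ℤ)) = (k:ℤ) then a α * ∏ j, (w j)^(α j) else 0)) = ∑ β : {β : Fin n → ℕ // ∑ i, β i = k}, a β.1 * ∏ j, (w j)^(β.1 j) := by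
      rw [tsum_eq_sum (s := Finset.image Subtype.val (Finset.univ : Finset {β : Fin n → ℕ // ∑ i, β i = k})) ?_]
      · rw [Finset.sum_image (fun β _ γ _ hbg => Subtype.val_injective hbg)]
        exact Finset.sum_congr rfl fun β _ => if_pos (by exact_mod_cast β.2)
      · intro α hα
        refine if_neg fun hcon => hα ?_
        rw [Finset.mem_image]
        exact ⟨⟨α, by exact_mod_cast hcon⟩, Finset.mem_univ _, rfl⟩
    have hDw : (∑' α : Fin n → ℕ, (if ((∑ i, α i : ℤ)) = (k:ℤ) then b α * ∏ j, (w j)^(α j) else 0)) = ∑ β : {β : Fin n → ℕ // ∑ i, β i = k}, b β.1 * ∏ j, (w j)^(β.1 j) := by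
      rw [tsum_eq_sum (s := Finset.image Subtype.val (Finset.univ : Finset {β : Fin n → ℕ // ∑ i, β i = k})) ?_]
      · rw [Finset.sum_image (fun β _ γ _ hbg => Subtype.val_injective hbg)]
        exact Finset.sum_congr rfl fun β _ => if_pos (by exact_mod_cast β.2)
      · intro α hα
        refine if_neg fun hcon => hα ?_
        rw [Finset.mem_image]
        exact ⟨⟨α, by exact_mod_cast hcon⟩, Finset.mem_univ _, rfl⟩
    have hprodw : ∀ β : {β : Fin n → ℕ // ∑ i, β i = k}, (∏ j, (w j)^(β.1 j))
        = Complex.exp (((∑ j, (β.1 j : ℝ) * θ j : ℝ):ℂ) * Complex.I) * ∏ j, (z j)^(β.1 j) := by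
      intro β
      simp only [hwdef]
      rw [show (((∑ j, (β.1 j : ℝ) * θ j : ℝ)):ℂ) * Complex.I
          = ∑ j, ((β.1 j : ℕ):ℂ) * ((θ j : ℂ) * Complex.I) from by
        rw [Complex.ofReal_sum, Finset.sum_mul]
        exact Finset.sum_congr rfl fun j _ => by push_cast; ring]
      rw [Complex.exp_sum]
      simp only [mul_pow, Finset.prod_mul_distrib, Complex.exp_nat_mul]
    have hCform : (∑ β : {β : Fin n → ℕ // ∑ i, β i = k}, a β.1 * ∏ j, (w j)^(β.1 j)) = ∑ β : {β : Fin n → ℕ // ∑ i, β i = k}, u β * Complex.exp (((∑ j, (β.1 j : ℝ) * θ j : ℝ):ℂ) * Complex.I) := by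
      refine Finset.sum_congr rfl fun β _ => ?_
      rw [hprodw β]
      simp only [hu]
      ring
    have hDform : (∑ β : {β : Fin n → ℕ // ∑ i, β i = k}, b β.1 * ∏ j, (w j)^(β.1 j)) = ∑ β : {β : Fin n → ℕ // ∑ i, β i = k}, v β * Complex.exp (((∑ j, (β.1 j : ℝ) * θ j : ℝ):ℂ) * Complex.I) := by
      refine Finset.sum_congr rfl fun β _ => ?_
      rw [hprodw β]
      simp only [hv]
      ring
    -- the boundary function
    have hζcont : Continuous (fun t : ℝ => (fun j => Complex.exp ((t:ℂ) * Complex.I) * w j)) :=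
      continuous_pi fun j =>
        (Complex.continuous_exp.comp (Complex.continuous_ofReal.mul continuous_const)).mul
          continuous_const
    have hFeq : ∀ t : ℝ, f (fun j => Complex.exp ((t:ℂ) * Complex.I) * w j) = h (fun j => Complex.exp ((t:ℂ) * Complex.I) * w j) + (starRingEnd ℂ) (g (fun j => Complex.exp ((t:ℂ) * Complex.I) * w j)) :=
      fun t => hfd _ (hζball t)
    have hhc : Continuous (fun t : ℝ => h (fun j => Complex.exp ((t:ℂ) * Complex.I) * w j)) :=
      hh.continuousOn.comp_continuous hζcont (fun t => hζball t)
    have hgc : Continuous (fun t : ℝ => g (fun j => Complex.exp ((t:ℂ) * Complex.I) * w j)) :=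
      hg.continuousOn.comp_continuous hζcont (fun t => hζball t)
    have hFcont : Continuous (fun t : ℝ => f (fun j => Complex.exp ((t:ℂ) * Complex.I) * w j)) := by
      rw [show (fun t : ℝ => f (fun j => Complex.exp ((t:ℂ) * Complex.I) * w j))
          = fun t : ℝ => h (fun j => Complex.exp ((t:ℂ) * Complex.I) * w j) + (starRingEnd ℂ) (g (fun j => Complex.exp ((t:ℂ) * Complex.I) * w j)) from funext hFeq]
      exact hhc.add (Continuous.comp continuous_star hgc)
    have hF1 : ∀ t : ℝ, ‖f (fun j => Complex.exp ((t:ℂ) * Complex.I) * w j)‖ ≤ 1 := fun t => le_of_lt (hmap _ (hζball t))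
    have hintH : ∀ (c : ℂ), IntervalIntegrable
        (fun t : ℝ => h (fun j => Complex.exp ((t:ℂ) * Complex.I) * w j) * Complex.exp (c * t * Complex.I)) volume 0 (2*π) :=
      fun c => (hhc.mul (cont_exp_int_mul _)).intervalIntegrable _ _
    have hintG : ∀ (c : ℂ), IntervalIntegrable
        (fun t : ℝ => (starRingEnd ℂ) (g (fun j => Complex.exp ((t:ℂ) * Complex.I) * w j) * Complex.exp (c * t * Complex.I)))
        volume 0 (2*π) :=
      fun c => (Continuous.comp continuous_star
        (hgc.mul (cont_exp_int_mul _))).intervalIntegrable _ _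
    have hc : (∫ t in (0:ℝ)..(2*π), f (fun j => Complex.exp ((t:ℂ) * Complex.I) * w j) * Complex.exp (((-(k:ℤ)):ℂ) * t * Complex.I))
        = 2*π * (∑' α : Fin n → ℕ, (if ((∑ i, α i : ℤ)) = (k:ℤ) then a α * ∏ j, (w j)^(α j) else 0)) := by
      have hpt2 : ∀ t : ℝ, f (fun j => Complex.exp ((t:ℂ) * Complex.I) * w j) * Complex.exp (((-(k:ℤ)):ℂ) * t * Complex.I)
          = h (fun j => Complex.exp ((t:ℂ) * Complex.I) * w j) * Complex.exp (((-(k:ℤ)):ℂ) * t * Complex.I)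
            + (starRingEnd ℂ) (g (fun j => Complex.exp ((t:ℂ) * Complex.I) * w j) * Complex.exp ((((k:ℤ)):ℂ) * t * Complex.I)) := by
        intro t
        rw [hFeq t, map_mul, conj_exp_real _ (by simp) t]
        ring
      simp only [hpt2]
      rw [intervalIntegral.integral_add (hintH _) (hintG _), intervalIntegral_conj2, E4,
        map_zero, add_zero, E1]
    have hd : (∫ t in (0:ℝ)..(2*π), f (fun j => Complex.exp ((t:ℂ) * Complex.I) * w j) * Complex.exp ((((k:ℤ)):ℂ) * t * Complex.I))
        = 2*π * ((starRingEnd ℂ) (∑' α : Fin n → ℕ, (if ((∑ i, α i : ℤ)) = (k:ℤ) then b α * ∏ j, (w j)^(α j) else 0))) := by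
      have hpt3 : ∀ t : ℝ, f (fun j => Complex.exp ((t:ℂ) * Complex.I) * w j) * Complex.exp ((((k:ℤ)):ℂ) * t * Complex.I)
          = h (fun j => Complex.exp ((t:ℂ) * Complex.I) * w j) * Complex.exp ((((k:ℤ)):ℂ) * t * Complex.I)
            + (starRingEnd ℂ) (g (fun j => Complex.exp ((t:ℂ) * Complex.I) * w j) * Complex.exp (((-(k:ℤ)):ℂ) * t * Complex.I)) := by
        intro t
        rw [hFeq t, map_mul, conj_exp_real _ (by simp) t, neg_neg]
        ring
      simp only [hpt3]
      rw [intervalIntegral.integral_add (hintH _) (hintG _), intervalIntegral_conj2, E3,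
        E2, zero_add, map_mul, map_mul]
      simp [Complex.conj_ofReal, map_ofNat]
    have hbd := coeff_bound (fun t : ℝ => f (fun j => Complex.exp ((t:ℂ) * Complex.I) * w j)) hFcont hF1 k hk
      (∑' α : Fin n → ℕ, (if ((∑ i, α i : ℤ)) = (k:ℤ) then a α * ∏ j, (w j)^(α j) else 0)) ((starRingEnd ℂ) (∑' α : Fin n → ℕ, (if ((∑ i, α i : ℤ)) = (k:ℤ) then b α * ∏ j, (w j)^(α j) else 0))) hc hd
    rw [RCLike.norm_conj] at hbd
    rw [hCw, hCform, hDw, hDform] at hbd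
    exact hbd
  -- ### integrate the bound over the torus
  have P1 : (∫ x : Fin n → ℝ, (∏ j, chi (x j)) * ‖∑ β : {β : Fin n → ℕ // ∑ i, β i = k}, u β * Complex.exp (((∑ j, (β.1 j : ℝ) * x j : ℝ):ℂ) * Complex.I)‖^2) = (2*π)^n * ∑ β : {β : Fin n → ℕ // ∑ i, β i = k}, ‖u β‖^2 :=
    parseval Subtype.val Subtype.val_injective u
  have P2 : (∫ x : Fin n → ℝ, (∏ j, chi (x j)) * ‖∑ β : {β : Fin n → ℕ // ∑ i, β i = k}, v β * Complex.exp (((∑ j, (β.1 j : ℝ) * x j : ℝ):ℂ) * Complex.I)‖^2) = (2*π)^n * ∑ β : {β : Fin n → ℕ // ∑ i, β i = k}, ‖v β‖^2 :=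
    parseval Subtype.val Subtype.val_injective v
  have hSCcont : Continuous (fun x : Fin n → ℝ => ∑ β : {β : Fin n → ℕ // ∑ i, β i = k}, u β * Complex.exp (((∑ j, (β.1 j : ℝ) * x j : ℝ):ℂ) * Complex.I)) :=
    continuous_finset_sum _ fun β _ => continuous_const.mul
      (Complex.continuous_exp.comp ((Complex.continuous_ofReal.comp
        (continuous_finset_sum _ fun j _ => continuous_const.mul (continuous_apply j))).mul
        continuous_const))
  have hSDcont : Continuous (fun x : Fin n → ℝ => ∑ β : {β : Fin n → ℕ // ∑ i, β i = k}, v β * Complex.exp (((∑ j, (β.1 j : ℝ) * x j : ℝ):ℂ) * Complex.I)) :=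
    continuous_finset_sum _ fun β _ => continuous_const.mul
      (Complex.continuous_exp.comp ((Complex.continuous_ofReal.comp
        (continuous_finset_sum _ fun j _ => continuous_const.mul (continuous_apply j))).mul
        continuous_const))
  have hPnn : ∀ x : Fin n → ℝ, 0 ≤ ∏ j, chi (x j) :=
    fun x => Finset.prod_nonneg fun j _ =>
      Set.indicator_nonneg (fun _ _ => zero_le_one) (x j)
  have hPmeas : MeasurableSet (Set.univ.pi fun _ : Fin n => Set.Ioc (0:ℝ) (2*π)) :=
    MeasurableSet.univ_pi fun _ => measurableSet_Ioc
  have hPeq : (fun x : Fin n → ℝ => ∏ j, chi (x j))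
      = Set.indicator (Set.univ.pi fun _ : Fin n => Set.Ioc (0:ℝ) (2*π)) (fun _ => (1:ℝ)) := by
    funext x
    by_cases hx : x ∈ Set.univ.pi fun _ : Fin n => Set.Ioc (0:ℝ) (2*π)
    · rw [Set.indicator_of_mem hx]
      have hc1 : ∀ j, chi (x j) = 1 :=
        fun j => Set.indicator_of_mem (hx j (Set.mem_univ j)) (fun _ => (1:ℝ))
      rw [Finset.prod_congr rfl fun j _ => hc1 j]
      exact Finset.prod_const_one
    · rw [Set.indicator_of_notMem hx]
      rw [Set.mem_pi] at hx
      push_neg at hx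
      obtain ⟨j0, _, hj0⟩ := hx
      have hc0 : chi (x j0) = 0 := Set.indicator_of_notMem hj0 (fun _ => (1:ℝ))
      exact Finset.prod_eq_zero (Finset.mem_univ j0) hc0
  have hvol : volume (Set.univ.pi fun _ : Fin n => Set.Ioc (0:ℝ) (2*π))
      = ENNReal.ofReal (2*π) ^ n := by
    rw [MeasureTheory.volume_pi_pi]
    simp [Real.volume_Ioc]
  have hvolfin : volume (Set.univ.pi fun _ : Fin n => Set.Ioc (0:ℝ) (2*π)) < ⊤ := by
    rw [hvol]
    exact ENNReal.pow_lt_top ENNReal.ofReal_lt_top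
  have hPint : Integrable (fun x : Fin n → ℝ => ∏ j, chi (x j)) := by
    rw [hPeq, MeasureTheory.integrable_indicator_iff hPmeas]
    exact MeasureTheory.integrableOn_const hvolfin.ne
  have hPintegral : (∫ x : Fin n → ℝ, ∏ j, chi (x j)) = (2*π)^n := by
    rw [hPeq, MeasureTheory.integral_indicator hPmeas, MeasureTheory.setIntegral_const,
      smul_eq_mul, mul_one, measureReal_def, hvol, ENNReal.toReal_pow, ENNReal.toReal_ofReal htp]
  have hbdpt : ∀ x : Fin n → ℝ, ‖∑ β : {β : Fin n → ℕ // ∑ i, β i = k}, u β * Complex.exp (((∑ j, (β.1 j : ℝ) * x j : ℝ):ℂ) * Complex.I)‖^2 + ‖∑ β : {β : Fin n → ℕ // ∑ i, β i = k}, v β * Complex.exp (((∑ j, (β.1 j : ℝ) * x j : ℝ):ℂ) * Complex.I)‖^2 ≤ 16/π^2 := by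
    intro x
    have h5 := key x
    have h6 : (‖∑ β : {β : Fin n → ℕ // ∑ i, β i = k}, u β * Complex.exp (((∑ j, (β.1 j : ℝ) * x j : ℝ):ℂ) * Complex.I)‖ + ‖∑ β : {β : Fin n → ℕ // ∑ i, β i = k}, v β * Complex.exp (((∑ j, (β.1 j : ℝ) * x j : ℝ):ℂ) * Complex.I)‖)^2 ≤ (4/π)^2 :=
      pow_le_pow_left₀ (by positivity) h5 2
    have h7 : ‖∑ β : {β : Fin n → ℕ // ∑ i, β i = k}, u β * Complex.exp (((∑ j, (β.1 j : ℝ) * x j : ℝ):ℂ) * Complex.I)‖^2 + ‖∑ β : {β : Fin n → ℕ // ∑ i, β i = k}, v β * Complex.exp (((∑ j, (β.1 j : ℝ) * x j : ℝ):ℂ) * Complex.I)‖^2 ≤ (‖∑ β : {β : Fin n → ℕ // ∑ i, β i = k}, u β * Complex.exp (((∑ j, (β.1 j : ℝ) * x j : ℝ):ℂ) * Complex.I)‖ + ‖∑ β : {β : Fin n → ℕ // ∑ i, β i = k}, v β * Complex.exp (((∑ j, (β.1 j : ℝ) * x j : ℝ):ℂ) * Complex.I)‖)^2 := by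
      nlinarith [mul_nonneg (norm_nonneg (∑ β : {β : Fin n → ℕ // ∑ i, β i = k}, u β * Complex.exp (((∑ j, (β.1 j : ℝ) * x j : ℝ):ℂ) * Complex.I))) (norm_nonneg (∑ β : {β : Fin n → ℕ // ∑ i, β i = k}, v β * Complex.exp (((∑ j, (β.1 j : ℝ) * x j : ℝ):ℂ) * Complex.I)))]
    calc ‖∑ β : {β : Fin n → ℕ // ∑ i, β i = k}, u β * Complex.exp (((∑ j, (β.1 j : ℝ) * x j : ℝ):ℂ) * Complex.I)‖^2 + ‖∑ β : {β : Fin n → ℕ // ∑ i, β i = k}, v β * Complex.exp (((∑ j, (β.1 j : ℝ) * x j : ℝ):ℂ) * Complex.I)‖^2 ≤ (‖∑ β : {β : Fin n → ℕ // ∑ i, β i = k}, u β * Complex.exp (((∑ j, (β.1 j : ℝ) * x j : ℝ):ℂ) * Complex.I)‖ + ‖∑ β : {β : Fin n → ℕ // ∑ i, β i = k}, v β * Complex.exp (((∑ j, (β.1 j : ℝ) * x j : ℝ):ℂ) * Complex.I)‖)^2 := h7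
      _ ≤ (4/π)^2 := h6
      _ = 16/π^2 := by rw [div_pow]; norm_num
  have hintC : Integrable (fun x : Fin n → ℝ => (∏ j, chi (x j)) * ‖∑ β : {β : Fin n → ℕ // ∑ i, β i = k}, u β * Complex.exp (((∑ j, (β.1 j : ℝ) * x j : ℝ):ℂ) * Complex.I)‖^2) := by
    refine MeasureTheory.Integrable.mono' (hPint.mul_const (16/π^2))
      (hPint.aestronglyMeasurable.mul ((hSCcont.norm.pow 2).aestronglyMeasurable))
      (Filter.Eventually.of_forall fun x => ?_)
    rw [Real.norm_eq_abs, abs_of_nonneg (mul_nonneg (hPnn x) (by positivity))]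
    refine mul_le_mul_of_nonneg_left ?_ (hPnn x)
    have := hbdpt x
    nlinarith [sq_nonneg ‖∑ β : {β : Fin n → ℕ // ∑ i, β i = k}, v β * Complex.exp (((∑ j, (β.1 j : ℝ) * x j : ℝ):ℂ) * Complex.I)‖]
  have hintD : Integrable (fun x : Fin n → ℝ => (∏ j, chi (x j)) * ‖∑ β : {β : Fin n → ℕ // ∑ i, β i = k}, v β * Complex.exp (((∑ j, (β.1 j : ℝ) * x j : ℝ):ℂ) * Complex.I)‖^2) := by
    refine MeasureTheory.Integrable.mono' (hPint.mul_const (16/π^2))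
      (hPint.aestronglyMeasurable.mul ((hSDcont.norm.pow 2).aestronglyMeasurable))
      (Filter.Eventually.of_forall fun x => ?_)
    rw [Real.norm_eq_abs, abs_of_nonneg (mul_nonneg (hPnn x) (by positivity))]
    refine mul_le_mul_of_nonneg_left ?_ (hPnn x)
    have := hbdpt x
    nlinarith [sq_nonneg ‖∑ β : {β : Fin n → ℕ // ∑ i, β i = k}, u β * Complex.exp (((∑ j, (β.1 j : ℝ) * x j : ℝ):ℂ) * Complex.I)‖]
  have hch : (2*π)^n * ((∑ β : {β : Fin n → ℕ // ∑ i, β i = k}, ‖u β‖^2) + (∑ β : {β : Fin n → ℕ // ∑ i, β i = k}, ‖v β‖^2))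
      ≤ (2*π)^n * (16/π^2) := by
    calc (2*π)^n * ((∑ β : {β : Fin n → ℕ // ∑ i, β i = k}, ‖u β‖^2) + (∑ β : {β : Fin n → ℕ // ∑ i, β i = k}, ‖v β‖^2))
        = (∫ x : Fin n → ℝ, (∏ j, chi (x j)) * ‖∑ β : {β : Fin n → ℕ // ∑ i, β i = k}, u β * Complex.exp (((∑ j, (β.1 j : ℝ) * x j : ℝ):ℂ) * Complex.I)‖^2)
          + (∫ x : Fin n → ℝ, (∏ j, chi (x j)) * ‖∑ β : {β : Fin n → ℕ // ∑ i, β i = k}, v β * Complex.exp (((∑ j, (β.1 j : ℝ) * x j : ℝ):ℂ) * Complex.I)‖^2) := by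
          rw [P1, P2]; ring
      _ = ∫ x : Fin n → ℝ, ((∏ j, chi (x j)) * ‖∑ β : {β : Fin n → ℕ // ∑ i, β i = k}, u β * Complex.exp (((∑ j, (β.1 j : ℝ) * x j : ℝ):ℂ) * Complex.I)‖^2 + (∏ j, chi (x j)) * ‖∑ β : {β : Fin n → ℕ // ∑ i, β i = k}, v β * Complex.exp (((∑ j, (β.1 j : ℝ) * x j : ℝ):ℂ) * Complex.I)‖^2) :=
          (MeasureTheory.integral_add hintC hintD).symm
      _ ≤ ∫ x : Fin n → ℝ, (∏ j, chi (x j)) * (16/π^2) := by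
          refine MeasureTheory.integral_mono (hintC.add hintD) (hPint.mul_const _) fun x => ?_
          have : (∏ j, chi (x j)) * ‖∑ β : {β : Fin n → ℕ // ∑ i, β i = k}, u β * Complex.exp (((∑ j, (β.1 j : ℝ) * x j : ℝ):ℂ) * Complex.I)‖^2 + (∏ j, chi (x j)) * ‖∑ β : {β : Fin n → ℕ // ∑ i, β i = k}, v β * Complex.exp (((∑ j, (β.1 j : ℝ) * x j : ℝ):ℂ) * Complex.I)‖^2
              = (∏ j, chi (x j)) * (‖∑ β : {β : Fin n → ℕ // ∑ i, β i = k}, u β * Complex.exp (((∑ j, (β.1 j : ℝ) * x j : ℝ):ℂ) * Complex.I)‖^2 + ‖∑ β : {β : Fin n → ℕ // ∑ i, β i = k}, v β * Complex.exp (((∑ j, (β.1 j : ℝ) * x j : ℝ):ℂ) * Complex.I)‖^2) := by ring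
          rw [this]
          exact mul_le_mul_of_nonneg_left (hbdpt x) (hPnn x)
      _ = (2*π)^n * (16/π^2) := by
          rw [MeasureTheory.integral_mul_const, hPintegral]
  have hfin : ((∑ β : {β : Fin n → ℕ // ∑ i, β i = k}, ‖u β‖^2) + (∑ β : {β : Fin n → ℕ // ∑ i, β i = k}, ‖v β‖^2)) ≤ 16/π^2 :=
    le_of_mul_le_mul_left hch (by positivity)
  rw [tsum_fintype]
  calc (∑ β : {β : Fin n → ℕ // ∑ i, β i = k}, (‖a β.1‖ ^ 2 + ‖b β.1‖ ^ 2) * ‖∏ i, z i ^ β.1 i‖ ^ 2)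
      = (∑ β : {β : Fin n → ℕ // ∑ i, β i = k}, (‖u β‖^2 + ‖v β‖^2)) := by
        refine Finset.sum_congr rfl fun β _ => ?_
        simp only [hu, hv]
        rw [norm_mul, norm_mul, mul_pow, mul_pow]
        ring
    _ = (∑ β : {β : Fin n → ℕ // ∑ i, β i = k}, ‖u β‖^2) + (∑ β : {β : Fin n → ℕ // ∑ i, β i = k}, ‖v β‖^2) := Finset.sum_add_distrib
    _ ≤ 16/π^2 := hfin
end
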